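/- arXiv:2506.20089 — 4 statements merged into one kernel-verified Lean document; each statement's English description precedes it below -/
import Mathlib

section
/- Let D > 0, s ∈ (0,2), q > 2, and c₀, c₁ ≥ 1. Let m : (0,D) → ℝ be continuous and satisfy m(t) = -c₀/t + A₀(t) with A₀(t) → 0 as t → 0⁺, and m(t) = c₁/(D-t) + A₁(t) with A₁(t) → 0 as t → D⁻. Let k : [0,D] → ℝ be continuous, and set d(t) = min(t, D-t). If φ : [0,D] → ℝ is continuous on [0,D], twice continuously differentiable on (0,D), nonnegative, and satisfies φ''(t) - m(t)·φ'(t) - k(t)·φ(t) + φ(t)^{q-1}/d(t)^s = 0 for all t ∈ (0,D), then either φ is identically zero on [0,D] or φ(t) > 0 for every t ∈ [0,D]. -/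
open Set Filter MeasureTheory intervalIntegral

/-- Auxiliary: a real `≤` from an `η`-room bound. -/
lemma le_of_forall_pos_le_add' {x y : ℝ} (h : ∀ η > 0, x ≤ y + η) : x ≤ y := by
  by_contra hc
  push_neg at hc
  have := h ((x - y)/2) (by linarith)
  linarith

set_option maxHeartbeats 2000000 in
lemma endpoint_zero (a c₀ C : ℝ) (ha : 0 < a) (hc₀ : 1 ≤ c₀) (hC : 0 ≤ C)
    (m φ : ℝ → ℝ)
    (hm_cont : ContinuousOn m (Ioc 0 a))
    (hm_at : ∀ t ∈ Ioo 0 a, ContinuousAt m t)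
    (hm_bound : ∀ t ∈ Ioc 0 a, |m t + c₀ / t| ≤ 1)
    (hφ_cont : ContinuousOn φ (Icc 0 a))
    (hφ0 : φ 0 = 0)
    (hφ_nonneg : ∀ t ∈ Icc 0 a, 0 ≤ φ t)
    (hφ'1 : ∀ t ∈ Ioo 0 a, HasDerivAt φ (deriv φ t) t)
    (hφ'2 : ∀ t ∈ Ioo 0 a, HasDerivAt (deriv φ) (deriv (deriv φ) t) t)
    (hφ''c : ContinuousOn (deriv (deriv φ)) (Ioo 0 a))
    (hODE : ∀ t ∈ Ioo 0 a, deriv (deriv φ) t ≤ m t * deriv φ t + C * φ t) :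
    ∃ b, 0 < b ∧ b < a ∧ ∀ t ∈ Icc 0 b, φ t = 0 := by
  classical
  have hCp : (0:ℝ) < C + 1 := by linarith
  set b := min (a/2) (min 1 (Real.exp (-a) / (C+1))) with hbdef
  have hb0 : 0 < b := lt_min (by linarith) (lt_min one_pos (div_pos (Real.exp_pos _) hCp))
  have hba : b < a := lt_of_le_of_lt (min_le_left _ _) (by linarith)
  have hb1 : b ≤ 1 := le_trans (min_le_right _ _) (min_le_left _ _)
  have hbe : (C+1) * b ≤ Real.exp (-a) := by
    have h1 : b ≤ Real.exp (-a) / (C+1) := le_trans (min_le_right _ _) (min_le_right _ _)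
    rw [le_div_iff₀ hCp] at h1
    linarith [h1]
  have hbC : Real.exp a * C * b ^ 2 ≤ 1 := by
    have h1 : Real.exp a * Real.exp (-a) = 1 := by rw [← Real.exp_add]; simp
    have h2 : b ^ 2 ≤ b := by nlinarith
    have h3 : Real.exp a * C * b ^ 2 ≤ Real.exp a * C * b := by
      have := mul_nonneg (Real.exp_pos a).le hC
      nlinarith
    have h4 : Real.exp a * (C * b) ≤ Real.exp a * ((C+1) * b) := by
      have := (Real.exp_pos a).le
      nlinarith
    calc Real.exp a * C * b ^ 2 ≤ Real.exp a * C * b := h3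
      _ = Real.exp a * (C * b) := by ring
      _ ≤ Real.exp a * ((C+1)*b) := h4
      _ ≤ Real.exp a * Real.exp (-a) := by nlinarith [(Real.exp_pos a).le]
      _ = 1 := h1
  -- integrating factor
  set G : ℝ → ℝ := fun t => ∫ τ in t..a, m τ with hGdef
  set μ : ℝ → ℝ := fun t => Real.exp (G t) with hμdef
  have hμpos : ∀ t, 0 < μ t := fun t => Real.exp_pos _
  have hmi : ∀ {u v : ℝ}, u ∈ Ioc 0 a → v ∈ Ioc 0 a → IntervalIntegrable m volume u v := by
    intro u v hu hv
    apply ContinuousOn.intervalIntegrable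
    apply hm_cont.mono
    intro x hx
    rw [Set.mem_uIcc] at hx
    rcases hx with ⟨h1, h2⟩ | ⟨h1, h2⟩
    · exact ⟨lt_of_lt_of_le hu.1 h1, le_trans h2 hv.2⟩
    · exact ⟨lt_of_lt_of_le hv.1 h1, le_trans h2 hu.2⟩
  have haIoc : a ∈ Ioc 0 a := ⟨ha, le_refl a⟩
  have hGsplit : ∀ {u v : ℝ}, u ∈ Ioc 0 a → v ∈ Ioc 0 a → G u - G v = ∫ τ in u..v, m τ := by
    intro u v hu hv
    have h1 := integral_add_adjacent_intervals (hmi hu hv) (hmi hv haIoc)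
    simp only [hGdef]
    linarith [h1]
  -- key comparison estimate for G
  have hGest : ∀ {τ t : ℝ}, τ ∈ Ioc 0 a → t ∈ Ioc 0 a → τ ≤ t →
      G τ - G t ≤ a + c₀ * (Real.log τ - Real.log t) := by
    intro τ t hτ ht hτt
    rw [hGsplit hτ ht]
    have huIcc : Set.uIcc τ t ⊆ Ioc 0 a := by
      rw [uIcc_of_le hτt]
      intro x hx
      exact ⟨lt_of_lt_of_le hτ.1 hx.1, le_trans hx.2 ht.2⟩
    have hne : ∀ x ∈ Set.uIcc τ t, x ≠ 0 := fun x hx => (huIcc hx).1.ne'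
    have hgc : ContinuousOn (fun σ : ℝ => 1 - c₀ * (1/σ)) (Set.uIcc τ t) := by
      apply ContinuousOn.sub continuousOn_const
      exact continuousOn_const.mul (continuousOn_const.div continuousOn_id hne)
    have hgint : IntervalIntegrable (fun σ : ℝ => 1 - c₀ * (1/σ)) volume τ t :=
      hgc.intervalIntegrable
    have hmono : ∫ σ in τ..t, m σ ≤ ∫ σ in τ..t, (1 - c₀ * (1/σ)) := by
      apply integral_mono_on hτt (hmi hτ ht) hgint
      intro σ hσ
      have hσ0 : 0 < σ := lt_of_lt_of_le hτ.1 hσ.1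
      have hb := (abs_le.mp (hm_bound σ ⟨hσ0, le_trans hσ.2 ht.2⟩)).2
      have : c₀ * (1/σ) = c₀ / σ := by ring
      linarith [hb, this.ge]
    have hint2 : IntervalIntegrable (fun σ : ℝ => c₀ * (1/σ)) volume τ t := by
      apply ContinuousOn.intervalIntegrable
      exact continuousOn_const.mul (continuousOn_const.div continuousOn_id hne)
    have h0mem : (0:ℝ) ∉ Set.uIcc τ t := fun h => (hne 0 h) rfl
    have hcalc : ∫ σ in τ..t, (1 - c₀ * (1/σ)) = (t - τ) - c₀ * Real.log (t/τ) := by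
      rw [integral_sub intervalIntegrable_const hint2,
        integral_one, intervalIntegral.integral_const_mul,
        integral_one_div h0mem]
    rw [hcalc] at hmono
    rw [Real.log_div ht.1.ne' hτ.1.ne'] at hmono
    have h5 : t - τ ≤ a := by linarith [hτ.1, ht.2]
    have h6 : c₀ * (Real.log τ - Real.log t) = -(c₀ * (Real.log t - Real.log τ)) := by ring
    linarith
  
  -- ratio bounds for μ
  have hratio1 : ∀ {τ t : ℝ}, τ ∈ Ioc 0 a → t ∈ Ioc 0 a → τ ≤ t → μ τ ≤ Real.exp a * μ t := by
    intro τ t hτ ht hτt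
    have h1 := hGest hτ ht hτt
    have hlog : Real.log τ - Real.log t ≤ 0 := by
      linarith [Real.log_le_log hτ.1 hτt]
    have h2 : G τ ≤ a + G t := by nlinarith
    calc μ τ = Real.exp (G τ) := rfl
      _ ≤ Real.exp (a + G t) := Real.exp_le_exp.mpr h2
      _ = Real.exp a * μ t := by rw [Real.exp_add]
  have hratio2 : ∀ {τ t : ℝ}, τ ∈ Ioc 0 a → t ∈ Ioc 0 a → τ ≤ t →
      μ τ ≤ Real.exp a * (τ / t) * μ t := by
    intro τ t hτ ht hτt
    have h1 := hGest hτ ht hτt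
    have hlog : Real.log τ - Real.log t ≤ 0 := by
      linarith [Real.log_le_log hτ.1 hτt]
    have h2 : c₀ * (Real.log τ - Real.log t) ≤ 1 * (Real.log τ - Real.log t) := by nlinarith
    have h3 : G τ ≤ a + (Real.log τ - Real.log t) + G t := by linarith
    have h4 : Real.exp (Real.log τ - Real.log t) = τ / t := by
      rw [Real.exp_sub, Real.exp_log hτ.1, Real.exp_log (lt_of_lt_of_le hτ.1 hτt)]
    calc μ τ = Real.exp (G τ) := rfl
      _ ≤ Real.exp (a + (Real.log τ - Real.log t) + G t) := Real.exp_le_exp.mpr h3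
      _ = Real.exp a * (τ / t) * μ t := by rw [Real.exp_add, Real.exp_add, h4]
  -- derivative of G and μ
  have hGd : ∀ t ∈ Ioo 0 a, HasDerivAt G (-m t) t := by
    intro t ht
    have h1 : IntervalIntegrable m volume a t := hmi haIoc ⟨ht.1, ht.2.le⟩
    have hmeas : StronglyMeasurableAtFilter m (nhds t) volume := by
      refine ⟨Ioo 0 a, Ioo_mem_nhds ht.1 ht.2, ?_⟩
      exact (hm_cont.mono Ioo_subset_Ioc_self).aestronglyMeasurable measurableSet_Ioo
    have h2 : HasDerivAt (fun u => ∫ τ in a..u, m τ) (m t) t :=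
      integral_hasDerivAt_right h1 hmeas (hm_at t ht)
    have h3 : HasDerivAt (fun u => -∫ τ in a..u, m τ) (-m t) t := h2.neg
    have h4 : G = fun u => -∫ τ in a..u, m τ := by
      funext u
      simp only [hGdef]
      rw [intervalIntegral.integral_symm]
    rw [h4]
    exact h3
  have hμd : ∀ t ∈ Ioo 0 a, HasDerivAt μ (-m t * μ t) t := by
    intro t ht
    have h1 := (hGd t ht).exp
    simp only [hμdef]
    convert h1 using 1
    ring
  -- the function h = μ * φ' and its derivative
  have hhd : ∀ t ∈ Ioo 0 a, HasDerivAt (fun u => μ u * deriv φ u)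
      (μ t * (deriv (deriv φ) t - m t * deriv φ t)) t := by
    intro t ht
    have h1 := (hμd t ht).fun_mul (hφ'2 t ht)
    refine h1.congr_deriv ?_
    ring
  -- continuity of the derivative integrand
  have hh'c : ContinuousOn (fun σ => μ σ * (deriv (deriv φ) σ - m σ * deriv φ σ)) (Ioo 0 a) := by
    have hμc : ContinuousOn μ (Ioo 0 a) := fun x hx => ((hμd x hx).continuousAt).continuousWithinAt
    have hφ'c : ContinuousOn (deriv φ) (Ioo 0 a) :=
      fun x hx => ((hφ'2 x hx).continuousAt).continuousWithinAt
    exact hμc.mul (hφ''c.sub ((hm_cont.mono Ioo_subset_Ioc_self).mul hφ'c))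
  have hsubIoo : ∀ {ξ t : ℝ}, 0 < ξ → ξ ≤ t → t < a → Set.uIcc ξ t ⊆ Ioo 0 a := by
    intro ξ t hξ hξt hta
    rw [uIcc_of_le hξt]
    intro x hx
    exact ⟨lt_of_lt_of_le hξ hx.1, lt_of_le_of_lt hx.2 hta⟩
  have hh'int : ∀ {ξ t : ℝ}, 0 < ξ → ξ ≤ t → t < a →
      IntervalIntegrable (fun σ => μ σ * (deriv (deriv φ) σ - m σ * deriv φ σ)) volume ξ t :=
    fun {ξ t} hξ hξt hta => (hh'c.mono (hsubIoo hξ hξt hta)).intervalIntegrable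
  have hFTC : ∀ {ξ t : ℝ}, 0 < ξ → ξ ≤ t → t < a →
      μ t * deriv φ t - μ ξ * deriv φ ξ
        = ∫ σ in ξ..t, μ σ * (deriv (deriv φ) σ - m σ * deriv φ σ) := by
    intro ξ t hξ hξt hta
    exact (integral_eq_sub_of_hasDerivAt
      (fun x hx => hhd x (hsubIoo hξ hξt hta hx)) (hh'int hξ hξt hta)).symm
  
  -- max of φ on [0, b]
  obtain ⟨tstar, htsmem, htsmax⟩ := isCompact_Icc.exists_isMaxOn (nonempty_Icc.mpr hb0.le)
    (hφ_cont.mono (Icc_subset_Icc_right hba.le))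
  rw [isMaxOn_iff] at htsmax
  set M := φ tstar with hMdef
  have hM0 : 0 ≤ M := hφ_nonneg tstar ⟨htsmem.1, le_trans htsmem.2 hba.le⟩
  -- Step 1: derivative bound
  have step1 : ∀ t ∈ Ioc 0 b, deriv φ t ≤ Real.exp a * C * M * t := by
    intro t ht
    have hta : t < a := lt_of_le_of_lt ht.2 hba
    have htIoc : t ∈ Ioc 0 a := ⟨ht.1, hta.le⟩
    apply le_of_forall_pos_le_add'
    intro η hη
    -- choose δ with φ δ small
    have hc' : 0 < η * t * Real.exp (-a) := mul_pos (mul_pos hη ht.1) (Real.exp_pos _)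
    have hcont0 : Tendsto φ (nhdsWithin 0 (Ioo 0 t)) (nhds 0) := by
      have h1 : ContinuousWithinAt φ (Icc 0 a) 0 := hφ_cont 0 ⟨le_refl 0, ha.le⟩
      have h2 : Tendsto φ (nhdsWithin 0 (Icc 0 a)) (nhds 0) := by
        unfold ContinuousWithinAt at h1
        rwa [hφ0] at h1
      exact h2.mono_left (nhdsWithin_mono 0 (fun x hx => ⟨hx.1.le, le_trans hx.2.le hta.le⟩))
    have hNB : (nhdsWithin (0:ℝ) (Ioo 0 t)).NeBot := by
      rw [← mem_closure_iff_nhdsWithin_neBot, closure_Ioo ht.1.ne]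
      exact ⟨le_refl 0, ht.1.le⟩
    have hev : ∀ᶠ δ in nhdsWithin (0:ℝ) (Ioo 0 t), φ δ < η * t * Real.exp (-a) :=
      hcont0 (Iio_mem_nhds hc')
    obtain ⟨δ, hφδ, hδmem⟩ := (hev.and (eventually_mem_nhdsWithin)).exists
    have hδ0 : 0 < δ := hδmem.1
    have hδt : δ < t := hδmem.2
    -- MVT on [0, δ]
    obtain ⟨ξ, hξmem, hξslope⟩ := exists_hasDerivAt_eq_slope φ (deriv φ) hδ0
      (hφ_cont.mono (Icc_subset_Icc (le_refl 0) (by linarith)))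
      (fun x hx => hφ'1 x ⟨hx.1, by linarith [hx.2]⟩)
    have hξ0 : 0 < ξ := hξmem.1
    have hξδ : ξ < δ := hξmem.2
    have hξt : ξ ≤ t := by linarith
    have hφδ0 : 0 ≤ φ δ := hφ_nonneg δ ⟨hδ0.le, by linarith⟩
    have hslope : deriv φ ξ = φ δ / δ := by
      rw [hξslope, hφ0]; ring_nf
    -- bound on h ξ = μ ξ * deriv φ ξ
    have hr2 : μ ξ ≤ Real.exp a * (ξ / t) * μ t := hratio2 ⟨hξ0, by linarith⟩ htIoc hξt
    have hhξ : μ ξ * deriv φ ξ ≤ η * μ t := by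
      rw [hslope]
      have e1 : μ ξ * (φ δ / δ) ≤ (Real.exp a * (ξ / t) * μ t) * (φ δ / δ) :=
        mul_le_mul_of_nonneg_right hr2 (div_nonneg hφδ0 hδ0.le)
      have e2 : (Real.exp a * (ξ / t) * μ t) * (φ δ / δ)
          = (Real.exp a * μ t) * ((ξ / δ) * (φ δ / t)) := by
        field_simp
      have e3 : ξ / δ ≤ 1 := (div_le_one hδ0).mpr hξδ.le
      have e4 : φ δ / t ≤ η * Real.exp (-a) := by
        rw [div_le_iff₀ ht.1]
        nlinarith
      have e5 : (ξ / δ) * (φ δ / t) ≤ 1 * (η * Real.exp (-a)) := by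
        apply mul_le_mul e3 e4 (div_nonneg hφδ0 ht.1.le) zero_le_one
      have e6 : (Real.exp a * μ t) * ((ξ / δ) * (φ δ / t))
          ≤ (Real.exp a * μ t) * (1 * (η * Real.exp (-a))) := by
        apply mul_le_mul_of_nonneg_left e5
        positivity
      have e7 : (Real.exp a * μ t) * (1 * (η * Real.exp (-a))) = η * μ t := by
        rw [Real.exp_neg]
        field_simp
      calc μ ξ * (φ δ / δ) ≤ (Real.exp a * (ξ / t) * μ t) * (φ δ / δ) := e1
        _ = (Real.exp a * μ t) * ((ξ / δ) * (φ δ / t)) := e2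
        _ ≤ (Real.exp a * μ t) * (1 * (η * Real.exp (-a))) := e6
        _ = η * μ t := e7
    -- FTC bound
    have hFt := hFTC hξ0 hξt hta
    have hIb : ∫ σ in ξ..t, μ σ * (deriv (deriv φ) σ - m σ * deriv φ σ)
        ≤ ∫ _σ in ξ..t, Real.exp a * μ t * (C * M) := by
      apply integral_mono_on hξt (hh'int hξ0 hξt hta) intervalIntegrable_const
      intro σ hσ
      have hσIoo : σ ∈ Ioo 0 a := ⟨lt_of_lt_of_le hξ0 hσ.1, lt_of_le_of_lt hσ.2 hta⟩
      have hODEσ := hODE σ hσIoo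
      have h1 : deriv (deriv φ) σ - m σ * deriv φ σ ≤ C * φ σ := by linarith
      have h2 : μ σ * (deriv (deriv φ) σ - m σ * deriv φ σ) ≤ μ σ * (C * φ σ) :=
        mul_le_mul_of_nonneg_left h1 (hμpos σ).le
      have h3 : φ σ ≤ M := htsmax σ ⟨hσ.1.trans' hξ0.le, le_trans hσ.2 ht.2⟩
      have h4 : μ σ ≤ Real.exp a * μ t := hratio1 ⟨hσIoo.1, hσIoo.2.le⟩ htIoc hσ.2
      have h5 : 0 ≤ φ σ := hφ_nonneg σ ⟨hσIoo.1.le, le_trans hσ.2 hta.le⟩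
      have h6 : C * φ σ ≤ C * M := mul_le_mul_of_nonneg_left h3 hC
      have h7 : μ σ * (C * φ σ) ≤ μ σ * (C * M) := mul_le_mul_of_nonneg_left h6 (hμpos σ).le
      have h8 : μ σ * (C * M) ≤ (Real.exp a * μ t) * (C * M) :=
        mul_le_mul_of_nonneg_right h4 (mul_nonneg hC hM0)
      calc μ σ * (deriv (deriv φ) σ - m σ * deriv φ σ) ≤ μ σ * (C * φ σ) := h2
        _ ≤ μ σ * (C * M) := h7
        _ ≤ Real.exp a * μ t * (C * M) := h8
    rw [intervalIntegral.integral_const] at hIb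
    have hIb2 : ∫ σ in ξ..t, μ σ * (deriv (deriv φ) σ - m σ * deriv φ σ)
        ≤ t * (Real.exp a * μ t * (C * M)) := by
      have : (t - ξ) • (Real.exp a * μ t * (C * M)) ≤ t * (Real.exp a * μ t * (C * M)) := by
        rw [smul_eq_mul]
        apply mul_le_mul_of_nonneg_right (by linarith)
        positivity
      linarith
    -- combine
    have hcomb : μ t * deriv φ t ≤ η * μ t + t * (Real.exp a * μ t * (C * M)) := by
      have := hFt
      linarith
    have hfinal : μ t * deriv φ t ≤ μ t * (Real.exp a * C * M * t + η) := by
      calc μ t * deriv φ t ≤ η * μ t + t * (Real.exp a * μ t * (C * M)) := hcomb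
        _ = μ t * (Real.exp a * C * M * t + η) := by ring
    exact le_of_mul_le_mul_left hfinal (hμpos t)
  
  -- M = 0
  have hMzero : M = 0 := by
    rcases eq_or_lt_of_le htsmem.1 with h0 | h0
    · rw [hMdef, ← h0, hφ0]
    · -- tstar > 0
      have htsa : tstar < a := lt_of_le_of_lt htsmem.2 hba
      have hkey : M ≤ Real.exp a * C * M * tstar ^ 2 / 2 := by
        apply le_of_forall_pos_le_add'
        intro η hη
        -- choose ξ small with φ ξ < η
        have hcont0 : Tendsto φ (nhdsWithin 0 (Ioo 0 tstar)) (nhds 0) := by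
          have h1 : ContinuousWithinAt φ (Icc 0 a) 0 := hφ_cont 0 ⟨le_refl 0, ha.le⟩
          have h2 : Tendsto φ (nhdsWithin 0 (Icc 0 a)) (nhds 0) := by
            unfold ContinuousWithinAt at h1
            rwa [hφ0] at h1
          exact h2.mono_left (nhdsWithin_mono 0 (fun x hx => ⟨hx.1.le, le_trans hx.2.le htsa.le⟩))
        have hNB : (nhdsWithin (0:ℝ) (Ioo 0 tstar)).NeBot := by
          rw [← mem_closure_iff_nhdsWithin_neBot, closure_Ioo h0.ne]
          exact ⟨le_refl 0, h0.le⟩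
        have hev2 : ∀ᶠ ξ in nhdsWithin (0:ℝ) (Ioo 0 tstar), φ ξ < η := hcont0 (Iio_mem_nhds hη)
        obtain ⟨ξ, hφξ, hξmem⟩ := (hev2.and (eventually_mem_nhdsWithin)).exists
        have hξ0 : 0 < ξ := hξmem.1
        have hξts : ξ < tstar := hξmem.2
        -- FTC for φ on [ξ, tstar]
        have hsub2 : Set.uIcc ξ tstar ⊆ Ioo 0 a := hsubIoo hξ0 hξts.le htsa
        have hφ'cont : ContinuousOn (deriv φ) (Ioo 0 a) :=
          fun x hx => ((hφ'2 x hx).continuousAt).continuousWithinAt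
        have hFTCφ : φ tstar - φ ξ = ∫ σ in ξ..tstar, deriv φ σ :=
          (integral_eq_sub_of_hasDerivAt (fun x hx => hφ'1 x (hsub2 hx))
            ((hφ'cont.mono hsub2).intervalIntegrable)).symm
        have hIb : ∫ σ in ξ..tstar, deriv φ σ
            ≤ ∫ σ in ξ..tstar, Real.exp a * C * M * σ := by
          apply integral_mono_on hξts.le ((hφ'cont.mono hsub2).intervalIntegrable)
            (by apply ContinuousOn.intervalIntegrable; exact continuousOn_const.mul continuousOn_id)
          intro σ hσ
          exact step1 σ ⟨lt_of_lt_of_le hξ0 hσ.1, le_trans hσ.2 htsmem.2⟩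
        have hcalc2 : ∫ σ in ξ..tstar, Real.exp a * C * M * σ
            = Real.exp a * C * M * ((tstar ^ 2 - ξ ^ 2) / 2) := by
          rw [intervalIntegral.integral_const_mul, integral_id]
        have hb1' : Real.exp a * C * M * ((tstar ^ 2 - ξ ^ 2) / 2)
            ≤ Real.exp a * C * M * tstar ^ 2 / 2 := by
          have hnn : 0 ≤ Real.exp a * C * M := mul_nonneg (mul_nonneg (Real.exp_pos a).le hC) hM0
          nlinarith [sq_nonneg ξ]
        have : φ tstar ≤ φ ξ + Real.exp a * C * M * tstar ^ 2 / 2 := by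
          rw [hcalc2] at hIb
          linarith
        calc M = φ tstar := rfl
          _ ≤ φ ξ + Real.exp a * C * M * tstar ^ 2 / 2 := this
          _ ≤ Real.exp a * C * M * tstar ^ 2 / 2 + η := by linarith
      -- conclude M ≤ 0 from hkey and e^a C b² ≤ 1
      have hts_b : tstar ≤ b := htsmem.2
      have hsq : tstar ^ 2 ≤ b ^ 2 := by nlinarith
      have hnn : 0 ≤ Real.exp a * C := by positivity
      have h1 : Real.exp a * C * M * tstar ^ 2 ≤ Real.exp a * C * M * b ^ 2 := by
        have : 0 ≤ Real.exp a * C * M := mul_nonneg (mul_nonneg (Real.exp_pos a).le hC) hM0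
        nlinarith
      have h2 : Real.exp a * C * M * b ^ 2 ≤ M := by
        have := hbC
        nlinarith
      have : M ≤ 0 := by linarith
      linarith [hM0, this]
  refine ⟨b, hb0, hba, ?_⟩
  intro t htmem
  have h1 : φ t ≤ M := htsmax t htmem
  have h2 : 0 ≤ φ t := hφ_nonneg t ⟨htmem.1, le_trans htmem.2 hba.le⟩
  rw [hMzero] at h1
  linarith

set_option maxHeartbeats 1000000 in
lemma interior_zero (t₀ r K : ℝ) (hr : 0 < r) (hK : 0 ≤ K) (φ : ℝ → ℝ)
    (hφ'1 : ∀ t ∈ Icc (t₀ - r) (t₀ + r), HasDerivAt φ (deriv φ t) t)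
    (hφ'2 : ∀ t ∈ Icc (t₀ - r) (t₀ + r), HasDerivAt (deriv φ) (deriv (deriv φ) t) t)
    (hbound : ∀ t ∈ Icc (t₀ - r) (t₀ + r), |deriv (deriv φ) t| ≤ K * (|deriv φ t| + |φ t|))
    (hφ0 : φ t₀ = 0) (hφ'0 : deriv φ t₀ = 0) :
    ∀ t ∈ Icc (t₀ - r) (t₀ + r), φ t = 0 := by
  set J := Icc (t₀ - r) (t₀ + r) with hJ
  have ht₀J : t₀ ∈ J := ⟨by linarith, by linarith⟩
  set K₂ := 3 * K + 1 with hK₂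
  set w : ℝ → ℝ := fun t => deriv φ t ^ 2 + φ t ^ 2 with hw
  have hwd : ∀ t ∈ J, HasDerivAt w
      (2 * deriv φ t * deriv (deriv φ) t + 2 * φ t * deriv φ t) t := by
    intro t ht
    have h1 : HasDerivAt (fun u => deriv φ u ^ 2) (2 * deriv φ t * deriv (deriv φ) t) t := by
      have := (hφ'2 t ht).fun_pow 2
      simpa using this
    have h2 : HasDerivAt (fun u => φ u ^ 2) (2 * φ t * deriv φ t) t := by
      have := (hφ'1 t ht).fun_pow 2
      simpa using this
    simpa using h1.fun_add h2
  have hwnonneg : ∀ t, 0 ≤ w t := fun t => by positivity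
  have hw0 : w t₀ = 0 := by simp [hw, hφ0, hφ'0]
  have hwbound : ∀ t ∈ J, |2 * deriv φ t * deriv (deriv φ) t + 2 * φ t * deriv φ t| ≤ K₂ * w t := by
    intro t ht
    have hb := hbound t ht
    have e1 : deriv φ t * deriv (deriv φ) t ≤ |deriv φ t| * |deriv (deriv φ) t| := by
      rw [← abs_mul]; exact le_abs_self _
    have e1' : -(|deriv φ t| * |deriv (deriv φ) t|) ≤ deriv φ t * deriv (deriv φ) t := by
      rw [← abs_mul]; exact neg_abs_le _
    have e2 : φ t * deriv φ t ≤ |φ t| * |deriv φ t| := by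
      rw [← abs_mul]; exact le_abs_self _
    have e2' : -(|φ t| * |deriv φ t|) ≤ φ t * deriv φ t := by
      rw [← abs_mul]; exact neg_abs_le _
    have e3 : |deriv φ t| * |deriv (deriv φ) t| ≤ |deriv φ t| * (K * (|deriv φ t| + |φ t|)) :=
      mul_le_mul_of_nonneg_left hb (abs_nonneg _)
    have e4 : 0 ≤ |deriv φ t| := abs_nonneg _
    have e5 : 0 ≤ |φ t| := abs_nonneg _
    have hsq1 : |deriv φ t| ^ 2 = deriv φ t ^ 2 := sq_abs _
    have hsq2 : |φ t| ^ 2 = φ t ^ 2 := sq_abs _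
    rw [abs_le]
    constructor <;>
    · simp only [hw, hK₂]
      nlinarith [e1, e1', e2, e2', e3, e4, e5, hsq1, hsq2, hK,
        sq_nonneg (|deriv φ t| - |φ t|), mul_nonneg e4 e5,
        mul_nonneg (mul_nonneg hK e4) e4, mul_nonneg (mul_nonneg hK e5) e5]
  -- forward direction: on [t₀, t₀ + r]
  have hforward : ∀ t ∈ Icc t₀ (t₀ + r), w t = 0 := by
    have hFd : ∀ t ∈ J, HasDerivAt (fun u => Real.exp (-(K₂ * u)) * w u)
        (Real.exp (-(K₂ * t)) * ((2 * deriv φ t * deriv (deriv φ) t + 2 * φ t * deriv φ t)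
          - K₂ * w t)) t := by
      intro t ht
      have h1 : HasDerivAt (fun u : ℝ => -(K₂ * u)) (-K₂) t := by
        simpa using ((hasDerivAt_id t).const_mul K₂).fun_neg
      have h2 := h1.exp.fun_mul (hwd t ht)
      refine h2.congr_deriv ?_
      ring
    have hanti : AntitoneOn (fun u => Real.exp (-(K₂ * u)) * w u) (Icc t₀ (t₀ + r)) := by
      apply antitoneOn_of_deriv_nonpos (convex_Icc _ _)
      · intro x hx
        have hxJ : x ∈ J := ⟨by linarith [hx.1], by linarith [hx.2]⟩
        exact ((hFd x hxJ).continuousAt).continuousWithinAt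
      · intro x hx
        rw [interior_Icc] at hx
        have hxJ : x ∈ J := ⟨by linarith [hx.1], by linarith [hx.2]⟩
        exact ((hFd x hxJ).differentiableAt).differentiableWithinAt
      · intro x hx
        rw [interior_Icc] at hx
        have hxJ : x ∈ J := ⟨by linarith [hx.1], by linarith [hx.2]⟩
        rw [(hFd x hxJ).deriv]
        have := (hwbound x hxJ)
        have h3 := (abs_le.mp this).2
        have h4 : (0:ℝ) < Real.exp (-(K₂ * x)) := Real.exp_pos _
        nlinarith
    intro t ht
    have h5 := hanti ⟨le_refl t₀, by linarith⟩ ht ht.1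
    have h6 : Real.exp (-(K₂ * t₀)) * w t₀ = 0 := by rw [hw0]; ring
    have h5' : Real.exp (-(K₂ * t)) * w t ≤ Real.exp (-(K₂ * t₀)) * w t₀ := h5
    rw [h6] at h5'
    have h7 : 0 < Real.exp (-(K₂ * t)) := Real.exp_pos _
    nlinarith [hwnonneg t]
  -- backward direction: on [t₀ - r, t₀]
  have hbackward : ∀ t ∈ Icc (t₀ - r) t₀, w t = 0 := by
    have hFd : ∀ t ∈ J, HasDerivAt (fun u => Real.exp (K₂ * u) * w u)
        (Real.exp (K₂ * t) * ((2 * deriv φ t * deriv (deriv φ) t + 2 * φ t * deriv φ t)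
          + K₂ * w t)) t := by
      intro t ht
      have h1 : HasDerivAt (fun u : ℝ => K₂ * u) (K₂) t := by
        simpa using ((hasDerivAt_id t).const_mul K₂)
      have h2 := h1.exp.fun_mul (hwd t ht)
      refine h2.congr_deriv ?_
      ring
    have hmono : MonotoneOn (fun u => Real.exp (K₂ * u) * w u) (Icc (t₀ - r) t₀) := by
      apply monotoneOn_of_deriv_nonneg (convex_Icc _ _)
      · intro x hx
        have hxJ : x ∈ J := ⟨by linarith [hx.1], by linarith [hx.2]⟩
        exact ((hFd x hxJ).continuousAt).continuousWithinAt
      · intro x hx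
        rw [interior_Icc] at hx
        have hxJ : x ∈ J := ⟨by linarith [hx.1], by linarith [hx.2]⟩
        exact ((hFd x hxJ).differentiableAt).differentiableWithinAt
      · intro x hx
        rw [interior_Icc] at hx
        have hxJ : x ∈ J := ⟨by linarith [hx.1], by linarith [hx.2]⟩
        rw [(hFd x hxJ).deriv]
        have := (hwbound x hxJ)
        have h3 := (abs_le.mp this).1
        have h4 : (0:ℝ) < Real.exp (K₂ * x) := Real.exp_pos _
        nlinarith
    intro t ht
    have h5 := hmono ht ⟨by linarith, le_refl t₀⟩ ht.2
    have h6 : Real.exp (K₂ * t₀) * w t₀ = 0 := by rw [hw0]; ring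
    have h5' : Real.exp (K₂ * t) * w t ≤ Real.exp (K₂ * t₀) * w t₀ := h5
    rw [h6] at h5'
    have h7 : 0 < Real.exp (K₂ * t) := Real.exp_pos _
    nlinarith [hwnonneg t]
  intro t ht
  have hwt : w t = 0 := by
    rcases le_total t t₀ with h | h
    · exact hbackward t ⟨ht.1, h⟩
    · exact hforward t ⟨h, ht.2⟩
  have : φ t ^ 2 = 0 := by
    have h1 : deriv φ t ^ 2 ≥ 0 := sq_nonneg _
    have h2 : φ t ^ 2 ≥ 0 := sq_nonneg _
    simp only [hw] at hwt
    linarith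
  exact pow_eq_zero_iff (by norm_num) |>.mp this

set_option maxHeartbeats 2000000 in
/-- ODE form of Theorem 1.1: a nonnegative solution of the Hardy–Sobolev ODE
is either identically zero or everywhere positive. -/
theorem stmt_0 (D s q c₀ c₁ : ℝ) (hD : 0 < D) (hs0 : 0 < s) (hs2 : s < 2)
    (hq : 2 < q) (hc₀ : 1 ≤ c₀) (hc₁ : 1 ≤ c₁)
    (m : ℝ → ℝ) (hm : ContinuousOn m (Ioo 0 D))
    (A₀ A₁ : ℝ → ℝ)
    (hm₀ : ∀ t ∈ Ioo 0 D, m t = -c₀ / t + A₀ t)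
    (hA₀ : Tendsto A₀ (nhdsWithin 0 (Ioi 0)) (nhds 0))
    (hm₁ : ∀ t ∈ Ioo 0 D, m t = c₁ / (D - t) + A₁ t)
    (hA₁ : Tendsto A₁ (nhdsWithin D (Iio D)) (nhds 0))
    (k : ℝ → ℝ) (hk : ContinuousOn k (Icc 0 D))
    (d : ℝ → ℝ) (hd : ∀ t, d t = min t (D - t))
    (φ : ℝ → ℝ)
    (hφcont : ContinuousOn φ (Icc 0 D))
    (hφC2 : ContDiffOn ℝ 2 φ (Ioo 0 D))
    (hφnonneg : ∀ t ∈ Icc 0 D, 0 ≤ φ t)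
    (hODE : ∀ t ∈ Ioo 0 D,
      deriv (deriv φ) t - m t * deriv φ t - k t * φ t + φ t ^ (q - 1) / d t ^ s = 0) :
    (∀ t ∈ Icc 0 D, φ t = 0) ∨ (∀ t ∈ Icc 0 D, 0 < φ t) := by
  by_cases hpos : ∀ t ∈ Icc 0 D, 0 < φ t
  · exact Or.inr hpos
  left
  push_neg at hpos
  obtain ⟨z, hz, hzle⟩ := hpos
  have hz0 : φ z = 0 := le_antisymm hzle (hφnonneg z hz)
  -- bounds for k and φ
  obtain ⟨Ck, hCk⟩ := isCompact_Icc.exists_bound_of_continuousOn hk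
  have hCk0 : 0 ≤ Ck := le_trans (norm_nonneg (k 0)) (hCk 0 ⟨le_refl 0, hD.le⟩)
  obtain ⟨Mφ, hMφ⟩ := isCompact_Icc.exists_bound_of_continuousOn hφcont
  -- derivative facts
  have hop : IsOpen (Ioo (0:ℝ) D) := isOpen_Ioo
  have hder1 : ∀ t ∈ Ioo 0 D, HasDerivAt φ (deriv φ t) t := by
    intro t ht
    exact (((hφC2.differentiableOn (by norm_num)) t ht).differentiableAt
      (hop.mem_nhds ht)).hasDerivAt
  have hC1 : ContDiffOn ℝ 1 (deriv φ) (Ioo 0 D) := hφC2.deriv_of_isOpen hop (by norm_num)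
  have hder2 : ∀ t ∈ Ioo 0 D, HasDerivAt (deriv φ) (deriv (deriv φ) t) t := by
    intro t ht
    exact (((hC1.differentiableOn (by norm_num)) t ht).differentiableAt
      (hop.mem_nhds ht)).hasDerivAt
  have hφ''c : ContinuousOn (deriv (deriv φ)) (Ioo 0 D) :=
    hC1.continuousOn_deriv_of_isOpen hop (by norm_num)
  -- auxiliary facts about the ODE
  have hdpos : ∀ t ∈ Ioo (0:ℝ) D, 0 < d t := by
    intro t ht
    rw [hd t]
    exact lt_min ht.1 (by linarith [ht.2])
  have hNL : ∀ t ∈ Ioo (0:ℝ) D, 0 ≤ φ t ^ (q - 1) / d t ^ s := by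
    intro t ht
    exact div_nonneg (Real.rpow_nonneg (hφnonneg t ⟨ht.1.le, ht.2.le⟩) _)
      (Real.rpow_pos_of_pos (hdpos t ht) s).le
  have hODE' : ∀ t ∈ Ioo 0 D,
      deriv (deriv φ) t = m t * deriv φ t + k t * φ t - φ t ^ (q - 1) / d t ^ s := by
    intro t ht
    have := hODE t ht
    linarith
  have hODEin : ∀ t ∈ Ioo 0 D, deriv (deriv φ) t ≤ m t * deriv φ t + Ck * φ t := by
    intro t ht
    have h1 := hODE' t ht
    have h2 := hNL t ht
    have h3 : k t * φ t ≤ Ck * φ t := by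
      apply mul_le_mul_of_nonneg_right _ (hφnonneg t ⟨ht.1.le, ht.2.le⟩)
      calc k t ≤ |k t| := le_abs_self _
        _ = ‖k t‖ := (Real.norm_eq_abs _).symm
        _ ≤ Ck := hCk t ⟨ht.1.le, ht.2.le⟩
    linarith
  -- rpow splitting
  have hsplit : ∀ x : ℝ, 0 ≤ x → x ^ (q - 1) = x ^ (q - 2) * x := by
    intro x hx
    rcases eq_or_lt_of_le hx with h0 | h0
    · rw [← h0, Real.zero_rpow (by linarith), Real.zero_rpow (by linarith), mul_zero]
    · rw [show q - 1 = (q - 2) + 1 by ring, Real.rpow_add h0, Real.rpow_one]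
  -- the key neighborhood property of zeros
  have key : ∀ τ ∈ Icc (0:ℝ) D, φ τ = 0 →
      ∃ ε > 0, ∀ t ∈ Icc 0 D, |t - τ| < ε → φ t = 0 := by
    intro τ hτ hτ0
    rcases eq_or_lt_of_le hτ.1 with h0 | h0
    · -- τ = 0 : left endpoint
      have hφzero : φ 0 = 0 := by rw [h0]; exact h0 ▸ hτ0
      -- find where |A₀| ≤ 1
      have hA₀b : ∃ ε > 0, ∀ t ∈ Ioo (0:ℝ) ε, |A₀ t| ≤ 1 := by
        have h1 : ∀ᶠ t in nhdsWithin 0 (Ioi 0), |A₀ t| ≤ 1 := by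
          have h2 := hA₀ (Metric.closedBall_mem_nhds (0:ℝ) one_pos)
          filter_upwards [h2] with t ht
          simpa [Metric.mem_closedBall, Real.dist_eq] using ht
        rw [eventually_nhdsWithin_iff, Metric.eventually_nhds_iff] at h1
        obtain ⟨ε, hε0, hε⟩ := h1
        refine ⟨ε, hε0, fun t ht => hε ?_ ht.1⟩
        rw [Real.dist_eq, sub_zero]
        exact abs_lt.mpr ⟨by linarith [ht.1], ht.2⟩
      obtain ⟨ε₀, hε₀0, hε₀⟩ := hA₀b
      set a := min (ε₀/2) (D/2) with hadef
      have ha0 : 0 < a := lt_min (by linarith) (by linarith)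
      have haD : a < D := lt_of_le_of_lt (min_le_right _ _) (by linarith)
      have haε : a < ε₀ := lt_of_le_of_lt (min_le_left _ _) (by linarith)
      have hsubD : Ioc 0 a ⊆ Ioo 0 D := fun x hx => ⟨hx.1, lt_of_le_of_lt hx.2 haD⟩
      obtain ⟨b, hb0, hba, hbz⟩ := endpoint_zero a c₀ Ck ha0 hc₀ hCk0 m φ
        (hm.mono hsubD)
        (fun t ht => hm.continuousAt (hop.mem_nhds (hsubD ⟨ht.1, ht.2.le⟩)))
        (by
          intro t ht
          have htD := hsubD ht
          have h1 : m t + c₀ / t = A₀ t := by rw [hm₀ t htD]; ring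
          rw [h1]
          exact hε₀ t ⟨ht.1, lt_of_le_of_lt ht.2 haε⟩)
        (hφcont.mono (Icc_subset_Icc_right haD.le))
        hφzero
        (fun t ht => hφnonneg t ⟨ht.1, le_trans ht.2 haD.le⟩)
        (fun t ht => hder1 t (hsubD ⟨ht.1, ht.2.le⟩))
        (fun t ht => hder2 t (hsubD ⟨ht.1, ht.2.le⟩))
        (hφ''c.mono (fun x hx => hsubD ⟨hx.1, hx.2.le⟩))
        (fun t ht => hODEin t (hsubD ⟨ht.1, ht.2.le⟩))
      refine ⟨b, hb0, ?_⟩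
      intro t ht habs
      apply hbz
      rw [← h0] at habs
      rw [sub_zero] at habs
      exact ⟨ht.1, by rw [abs_of_nonneg ht.1] at habs; exact habs.le⟩
    rcases eq_or_lt_of_le hτ.2 with hDeq | hDlt
    · -- τ = D : right endpoint, by reflection
      have hφD : φ D = 0 := by rw [← hDeq]; exact hτ0
      have hA₁b : ∃ ε > 0, ∀ u ∈ Ioo (D - ε) D, |A₁ u| ≤ 1 := by
        have h1 : ∀ᶠ u in nhdsWithin D (Iio D), |A₁ u| ≤ 1 := by
          have h2 := hA₁ (Metric.closedBall_mem_nhds (0:ℝ) one_pos)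
          filter_upwards [h2] with u hu
          simpa [Metric.mem_closedBall, Real.dist_eq] using hu
        rw [eventually_nhdsWithin_iff, Metric.eventually_nhds_iff] at h1
        obtain ⟨ε, hε0, hε⟩ := h1
        refine ⟨ε, hε0, fun u hu => hε ?_ hu.2⟩
        rw [Real.dist_eq]
        exact abs_lt.mpr ⟨by linarith [hu.1], by linarith [hu.2]⟩
      obtain ⟨ε₁, hε₁0, hε₁⟩ := hA₁b
      set a := min (ε₁/2) (D/2) with hadef
      have ha0 : 0 < a := lt_min (by linarith) (by linarith)
      have haD : a < D := lt_of_le_of_lt (min_le_right _ _) (by linarith)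
      have haε : a < ε₁ := lt_of_le_of_lt (min_le_left _ _) (by linarith)
      set ψ : ℝ → ℝ := fun u => φ (D - u) with hψdef
      set mR : ℝ → ℝ := fun u => -m (D - u) with hmRdef
      have hmapD : ∀ {u : ℝ}, u ∈ Ioo 0 D → D - u ∈ Ioo 0 D :=
        fun {u} hu => ⟨by linarith [hu.2], by linarith [hu.1]⟩
      have hrefl1 : ∀ u ∈ Ioo 0 D, HasDerivAt ψ (-deriv φ (D - u)) u := by
        intro u hu
        have h1 := (hder1 _ (hmapD hu)).comp u ((hasDerivAt_id u).const_sub D)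
        simpa [hψdef, Function.comp_def] using h1
      have hψd : ∀ u ∈ Ioo 0 D, deriv ψ u = -deriv φ (D - u) :=
        fun u hu => (hrefl1 u hu).deriv
      have hrefl2 : ∀ u ∈ Ioo 0 D, HasDerivAt (deriv ψ) (deriv (deriv φ) (D - u)) u := by
        intro u hu
        have h1 := (hder2 _ (hmapD hu)).comp u ((hasDerivAt_id u).const_sub D)
        have h2 : HasDerivAt (fun x => -deriv φ (D - x)) (deriv (deriv φ) (D - u)) u := by
          have h3 := h1.fun_neg
          simpa [Function.comp_def] using h3
        apply h2.congr_of_eventuallyEq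
        filter_upwards [hop.mem_nhds hu] with x hx
        exact hψd x hx
      have hψd2 : ∀ u ∈ Ioo 0 D, deriv (deriv ψ) u = deriv (deriv φ) (D - u) :=
        fun u hu => (hrefl2 u hu).deriv
      have hsubD : Ioc 0 a ⊆ Ioo 0 D := fun x hx => ⟨hx.1, lt_of_le_of_lt hx.2 haD⟩
      obtain ⟨b, hb0, hba, hbz⟩ := endpoint_zero a c₁ Ck ha0 hc₁ hCk0 mR ψ
        (by
          apply ContinuousOn.neg
          apply hm.comp ((continuous_const.sub continuous_id).continuousOn)
          intro u hu
          exact hmapD (hsubD hu))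
        (by
          intro u hu
          have huD := hsubD ⟨hu.1, hu.2.le⟩
          apply ContinuousAt.neg
          exact (hm.continuousAt (hop.mem_nhds (hmapD huD))).comp
            ((continuous_const.sub continuous_id).continuousAt))
        (by
          intro u hu
          have huD := hsubD hu
          have h1 : m (D - u) = c₁ / u + A₁ (D - u) := by
            have := hm₁ (D - u) (hmapD huD)
            rwa [sub_sub_cancel] at this
          have h2 : mR u + c₁ / u = -A₁ (D - u) := by
            simp only [hmRdef]
            rw [h1]; ring
          rw [h2, abs_neg]
          apply hε₁
          constructor
          · have : u < ε₁ := lt_of_le_of_lt hu.2 haε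
            linarith
          · linarith [hu.1])
        (by
          apply hφcont.comp ((continuous_const.sub continuous_id).continuousOn)
          intro u hu
          constructor
          · simp only [Pi.sub_apply, id]; linarith [hu.2, haD]
          · simp only [Pi.sub_apply, id]; linarith [hu.1])
        (by simp only [hψdef]; rw [sub_zero]; exact hφD)
        (by
          intro u hu
          apply hφnonneg
          constructor
          · linarith [hu.2, haD.le]
          · linarith [hu.1])
        (by
          intro u hu
          have huD := hsubD ⟨hu.1, hu.2.le⟩
          rw [hψd u huD]
          exact hrefl1 u huD)
        (by
          intro u hu
          have huD := hsubD ⟨hu.1, hu.2.le⟩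
          rw [hψd2 u huD]
          exact hrefl2 u huD)
        (by
          apply ContinuousOn.congr
            (f := fun u => deriv (deriv φ) (D - u)) ?_
            ?_
          · apply hφ''c.comp ((continuous_const.sub continuous_id).continuousOn)
            intro u hu
            exact hmapD (hsubD ⟨hu.1, hu.2.le⟩)
          · intro u hu
            exact hψd2 u (hsubD ⟨hu.1, hu.2.le⟩))
        (by
          intro u hu
          have huD := hsubD ⟨hu.1, hu.2.le⟩
          have hDu := hmapD huD
          rw [hψd2 u huD, hψd u huD]
          have h1 := hODE' (D - u) hDu
          have h2 := hNL (D - u) hDu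
          have h3 : k (D - u) * φ (D - u) ≤ Ck * φ (D - u) := by
            apply mul_le_mul_of_nonneg_right _ (hφnonneg (D - u) ⟨hDu.1.le, hDu.2.le⟩)
            calc k (D - u) ≤ |k (D - u)| := le_abs_self _
              _ = ‖k (D - u)‖ := (Real.norm_eq_abs _).symm
              _ ≤ Ck := hCk (D - u) ⟨hDu.1.le, hDu.2.le⟩
          have h4 : mR u * -deriv φ (D - u) = m (D - u) * deriv φ (D - u) := by
            simp only [hmRdef]; ring
          rw [h4]
          have h5 : ψ u = φ (D - u) := rfl
          rw [h5]
          linarith)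
      refine ⟨b, hb0, ?_⟩
      intro t ht habs
      rw [hDeq] at habs
      have h6 : D - t ∈ Icc 0 b := by
        constructor
        · linarith [ht.2]
        · rw [abs_sub_comm, abs_of_nonneg (by linarith [ht.2] : (0:ℝ) ≤ D - t)] at habs
          exact habs.le
      have h7 := hbz (D - t) h6
      simp only [hψdef, sub_sub_cancel] at h7
      exact h7
    · -- interior point
      set r := min τ (D - τ) / 2 with hrdef
      have hr0 : 0 < r := by
        apply div_pos _ (by norm_num)
        exact lt_min h0 (by linarith)
      have hrτ : r ≤ τ / 2 := by
        have := min_le_left τ (D - τ); linarith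
      have hrD : r ≤ (D - τ) / 2 := by
        have := min_le_right τ (D - τ); linarith
      have hJsub : Icc (τ - r) (τ + r) ⊆ Ioo 0 D := by
        intro x hx
        constructor
        · have := hx.1; linarith
        · have := hx.2; linarith
      have hJIcc : Icc (τ - r) (τ + r) ⊆ Icc 0 D := by
        intro x hx
        have := hJsub hx
        exact ⟨this.1.le, this.2.le⟩
      -- bound for m on J
      obtain ⟨Cm, hCm⟩ := isCompact_Icc.exists_bound_of_continuousOn (hm.mono hJsub)
      have hCm0 : 0 ≤ Cm := le_trans (norm_nonneg (m τ)) (hCm τ ⟨by linarith, by linarith⟩)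
      -- lower bound for d on J
      set dm := min (τ - r) (D - (τ + r)) with hdmdef
      have hdm0 : 0 < dm := by
        apply lt_min
        · linarith
        · linarith
      have hdmle : ∀ x ∈ Icc (τ - r) (τ + r), dm ≤ d x := by
        intro x hx
        rw [hd x]
        apply le_min
        · exact le_trans (min_le_left _ _) hx.1
        · have := hx.2
          calc dm ≤ D - (τ + r) := min_le_right _ _
            _ ≤ D - x := by linarith
      set Kd := dm ^ s with hKddef
      have hKd0 : 0 < Kd := Real.rpow_pos_of_pos hdm0 s
      set P := (max Mφ 1) ^ (q - 2) with hPdef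
      have hP0 : 0 ≤ P := Real.rpow_nonneg (le_trans zero_le_one (le_max_right _ _)) _
      set K := Cm + Ck + P / Kd with hKdef
      have hK0 : 0 ≤ K := by
        rw [hKdef]
        exact add_nonneg (add_nonneg hCm0 hCk0) (div_nonneg hP0 hKd0.le)
      -- pointwise second-derivative bound on J
      have hbound : ∀ x ∈ Icc (τ - r) (τ + r),
          |deriv (deriv φ) x| ≤ K * (|deriv φ x| + |φ x|) := by
        intro x hx
        have hxD := hJsub hx
        have hφx0 : 0 ≤ φ x := hφnonneg x (hJIcc hx)
        have e0 := hODE' x hxD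
        have em : |m x| ≤ Cm := by
          rw [← Real.norm_eq_abs]; exact hCm x hx
        have ek : |k x| ≤ Ck := by
          rw [← Real.norm_eq_abs]; exact hCk x (hJIcc hx)
        have eNL0 : 0 ≤ φ x ^ (q - 1) / d x ^ s := hNL x hxD
        have eNL : φ x ^ (q - 1) / d x ^ s ≤ (P / Kd) * φ x := by
          have h1 : φ x ^ (q - 1) = φ x ^ (q - 2) * φ x := hsplit _ hφx0
          have h2 : φ x ^ (q - 2) ≤ P := by
            apply Real.rpow_le_rpow hφx0 _ (by linarith)
            calc φ x ≤ |φ x| := le_abs_self _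
              _ = ‖φ x‖ := (Real.norm_eq_abs _).symm
              _ ≤ Mφ := hMφ x (hJIcc hx)
              _ ≤ max Mφ 1 := le_max_left _ _
          have h3 : Kd ≤ d x ^ s := Real.rpow_le_rpow hdm0.le (hdmle x hx) hs0.le
          have h4 : φ x ^ (q - 1) / d x ^ s ≤ (P * φ x) / Kd := by
            rw [h1]
            apply div_le_div₀ (mul_nonneg hP0 hφx0)
              (mul_le_mul_of_nonneg_right h2 hφx0) hKd0 h3
          calc φ x ^ (q - 1) / d x ^ s ≤ (P * φ x) / Kd := h4
            _ = (P / Kd) * φ x := by ring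
        have em1 : m x * deriv φ x ≤ Cm * |deriv φ x| := by
          calc m x * deriv φ x ≤ |m x * deriv φ x| := le_abs_self _
            _ = |m x| * |deriv φ x| := abs_mul _ _
            _ ≤ Cm * |deriv φ x| := mul_le_mul_of_nonneg_right em (abs_nonneg _)
        have em2 : -(Cm * |deriv φ x|) ≤ m x * deriv φ x := by
          have h5 : -(m x * deriv φ x) ≤ Cm * |deriv φ x| := by
            calc -(m x * deriv φ x) ≤ |m x * deriv φ x| := neg_le_abs _
              _ = |m x| * |deriv φ x| := abs_mul _ _
              _ ≤ Cm * |deriv φ x| := mul_le_mul_of_nonneg_right em (abs_nonneg _)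
          linarith
        have ek1 : k x * φ x ≤ Ck * |φ x| := by
          calc k x * φ x ≤ |k x * φ x| := le_abs_self _
            _ = |k x| * |φ x| := abs_mul _ _
            _ ≤ Ck * |φ x| := mul_le_mul_of_nonneg_right ek (abs_nonneg _)
        have ek2 : -(Ck * |φ x|) ≤ k x * φ x := by
          have h5 : -(k x * φ x) ≤ Ck * |φ x| := by
            calc -(k x * φ x) ≤ |k x * φ x| := neg_le_abs _
              _ = |k x| * |φ x| := abs_mul _ _
              _ ≤ Ck * |φ x| := mul_le_mul_of_nonneg_right ek (abs_nonneg _)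
          linarith
        have eNL' : φ x ^ (q - 1) / d x ^ s ≤ (P / Kd) * |φ x| := by
          calc φ x ^ (q - 1) / d x ^ s ≤ (P / Kd) * φ x := eNL
            _ ≤ (P / Kd) * |φ x| :=
              mul_le_mul_of_nonneg_left (le_abs_self _) (div_nonneg hP0 hKd0.le)
        have x1 : 0 ≤ Cm * |φ x| := mul_nonneg hCm0 (abs_nonneg _)
        have x2 : 0 ≤ Ck * |deriv φ x| := mul_nonneg hCk0 (abs_nonneg _)
        have x3 : 0 ≤ (P / Kd) * |deriv φ x| :=
          mul_nonneg (div_nonneg hP0 hKd0.le) (abs_nonneg _)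
        have x4 : 0 ≤ (P / Kd) * |φ x| := mul_nonneg (div_nonneg hP0 hKd0.le) (abs_nonneg _)
        have hKexp : K * (|deriv φ x| + |φ x|)
            = Cm * |deriv φ x| + Cm * |φ x| + Ck * |deriv φ x| + Ck * |φ x|
              + (P / Kd) * |deriv φ x| + (P / Kd) * |φ x| := by
          rw [hKdef]; ring
        rw [abs_le]
        constructor
        · rw [e0, hKexp]
          linarith
        · rw [e0, hKexp]
          linarith
      -- deriv φ τ = 0 since τ is an interior minimum
      have hlocmin : IsLocalMin φ τ := by
        have hmem : Icc (0:ℝ) D ∈ nhds τ := Icc_mem_nhds h0 hDlt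
        filter_upwards [hmem] with x hx
        rw [hτ0]
        exact hφnonneg x hx
      have hφ'0 : deriv φ τ = 0 := hlocmin.deriv_eq_zero
      have hzero := interior_zero τ r K hr0 hK0 φ
        (fun t ht => hder1 t (hJsub ht))
        (fun t ht => hder2 t (hJsub ht))
        hbound hτ0 hφ'0
      refine ⟨r, hr0, ?_⟩
      intro t ht habs
      apply hzero
      have := abs_lt.mp habs
      exact ⟨by linarith [this.1], by linarith [this.2]⟩
  -- clopen argument
  haveI hpc : PreconnectedSpace (Icc (0:ℝ) D) := Subtype.preconnectedSpace isPreconnected_Icc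
  set Z : Set (Icc (0:ℝ) D) := {x | φ x = 0} with hZdef
  have hZclosed : IsClosed Z := isClosed_eq (hφcont.restrict) continuous_const
  have hZopen : IsOpen Z := by
    rw [isOpen_iff_mem_nhds]
    rintro ⟨τ, hτ⟩ hτZ
    obtain ⟨ε, hε0, hε⟩ := key τ hτ hτZ
    rw [mem_nhds_subtype]
    refine ⟨Metric.ball τ ε, Metric.ball_mem_nhds τ hε0, ?_⟩
    rintro ⟨t, ht⟩ htb
    exact hε t ht (by simpa [Real.dist_eq] using htb)
  have hZuniv : Z = univ := IsClopen.eq_univ ⟨hZclosed, hZopen⟩ ⟨⟨z, hz⟩, hz0⟩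
  intro t ht
  have : (⟨t, ht⟩ : Icc (0:ℝ) D) ∈ Z := by rw [hZuniv]; exact mem_univ _
  exact this
end

section
/- Let T > 0 and c ≥ 1. Let m : (0,T] → ℝ be continuous with m(t) = -c/t + A(t) where A(t) → 0 as t → 0⁺, and let h : (0,T) → ℝ be continuous and bounded from below. If φ : [0,T] → ℝ is continuous on [0,T], twice continuously differentiable on (0,T), satisfies φ(t) > 0 for all t ∈ (0,T), and satisfies φ''(t) - m(t)·φ'(t) + h(t)·φ(t) = 0 for all t ∈ (0,T), then φ(0) > 0. -/
open Set Filter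

set_option maxHeartbeats 1000000 in
/-- Auxiliary bootstrap step: if `φ ≤ Q` on `(0, τ]`, then `φ ≤ Q/2` there. -/
private lemma stmt_1_key (T c ε τ β Q : ℝ)
    (φ φ' μ g h : ℝ → ℝ)
    (hc : 1 ≤ c) (hβ0 : 0 ≤ β)
    (hτ0 : 0 < τ) (hτε : τ < ε) (hτT : τ < T) (hτβ : τ ≤ 1/(3*(β+1)))
    (hβ : ∀ t ∈ Ioo (0:ℝ) T, -h t ≤ β)
    (hφpos : ∀ t ∈ Ioo (0:ℝ) T, 0 < φ t)
    (hφcont : ContinuousOn φ (Icc 0 T))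
    (hcon : φ 0 ≤ 0)
    (hφdiff : ∀ t ∈ Ioo (0:ℝ) T, HasDerivAt φ (φ' t) t)
    (hgderiv : ∀ t ∈ Ioo (0:ℝ) ε, HasDerivAt g (-(μ t * (h t * φ t))) t)
    (hgdef : ∀ u, g u = μ u * φ' u)
    (hμpos : ∀ t ∈ Ioc (0:ℝ) ε, 0 < μ t)
    (hμle : ∀ t ∈ Ioc (0:ℝ) ε, μ t ≤ Real.exp 1 * t)
    (hμle' : ∀ t ∈ Ioc (0:ℝ) ε, μ t ≤ t ^ c * Real.exp 1)
    (hμge : ∀ t ∈ Ioc (0:ℝ) ε, t ^ c * Real.exp (-1) ≤ μ t)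
    (hQ0 : 0 ≤ Q) (hQ : ∀ t ∈ Ioc (0:ℝ) τ, φ t ≤ Q) :
    ∀ t ∈ Ioc (0:ℝ) τ, φ t ≤ Q / 2 := by
  obtain ⟨D, hDdef⟩ : ∃ D : ℝ, D = Real.exp 1 * β * Q := ⟨_, rfl⟩
  have hD0 : 0 ≤ D := by
    rw [hDdef]; exact mul_nonneg (mul_nonneg (Real.exp_pos 1).le hβ0) hQ0
  have hc1 : (0:ℝ) < c + 1 := by linarith
  obtain ⟨G, hGdef⟩ : ∃ G : ℝ → ℝ, G = fun u => g u - D * (u ^ (c+1) / (c+1)) :=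
    ⟨_, rfl⟩
  have hGderiv : ∀ t ∈ Ioo (0:ℝ) ε,
      HasDerivAt G (-(μ t * (h t * φ t)) - D * t ^ c) t := by
    intro t ht
    have hpow : HasDerivAt (fun u : ℝ => u ^ (c+1) / (c+1)) (t ^ c) t := by
      have h1 : HasDerivAt (fun u : ℝ => u ^ (c+1)) ((c+1) * t ^ (c+1-1)) t :=
        Real.hasDerivAt_rpow_const (Or.inl (ne_of_gt ht.1))
      have h2 := h1.div_const (c+1)
      have h3 : (c+1) * t ^ (c+1-1) / (c+1) = t ^ c := by
        rw [show c+1-1 = c by ring]; field_simp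
      rwa [h3] at h2
    rw [hGdef]
    exact (hgderiv t ht).sub (hpow.const_mul D)
  have hGanti : AntitoneOn G (Ioc 0 τ) := by
    apply antitoneOn_of_deriv_nonpos (convex_Ioc 0 τ)
    · intro x hx
      exact (hGderiv x ⟨hx.1, lt_of_le_of_lt hx.2 hτε⟩).continuousAt.continuousWithinAt
    · rw [interior_Ioc]
      intro x hx
      exact (hGderiv x ⟨hx.1, hx.2.trans hτε⟩).differentiableAt.differentiableWithinAt
    · rw [interior_Ioc]
      intro x hx
      rw [(hGderiv x ⟨hx.1, hx.2.trans hτε⟩).deriv]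
      have hxε : x ∈ Ioc (0:ℝ) ε := ⟨hx.1, (hx.2.trans hτε).le⟩
      have hxT : x ∈ Ioo (0:ℝ) T := ⟨hx.1, hx.2.trans hτT⟩
      have h1 : -(h x) ≤ β := hβ x hxT
      have h2 : 0 < φ x := hφpos x hxT
      have h3 : φ x ≤ Q := hQ x ⟨hx.1, hx.2.le⟩
      have h4 : 0 < μ x := hμpos x hxε
      have h5 : μ x ≤ x ^ c * Real.exp 1 := hμle' x hxε
      have e1 : -(h x * φ x) ≤ β * Q := by nlinarith
      have e2 : μ x * (-(h x * φ x)) ≤ μ x * (β * Q) :=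
        mul_le_mul_of_nonneg_left e1 h4.le
      have e3 : μ x * (β * Q) ≤ x ^ c * Real.exp 1 * (β * Q) :=
        mul_le_mul_of_nonneg_right h5 (mul_nonneg hβ0 hQ0)
      rw [hDdef]
      nlinarith [e2, e3]
  have hgB : ∀ t ∈ Ioc (0:ℝ) τ, g t ≤ D * (t ^ (c+1) / (c+1)) := by
    intro t₀ ht₀
    by_contra hgt
    push_neg at hgt
    obtain ⟨δ, hδdef⟩ : ∃ δ : ℝ, δ = g t₀ - D * (t₀ ^ (c+1) / (c+1)) := ⟨_, rfl⟩
    have hδ0 : 0 < δ := hδdef ▸ sub_pos.mpr hgt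
    have hgs : ∀ s ∈ Ioc (0:ℝ) t₀, δ ≤ g s := by
      intro s hs
      have hsτ : s ∈ Ioc (0:ℝ) τ := ⟨hs.1, hs.2.trans ht₀.2⟩
      have h1 := hGanti hsτ ht₀ hs.2
      simp only [hGdef] at h1
      have hnn : 0 ≤ D * (s ^ (c+1) / (c+1)) :=
        mul_nonneg hD0 (div_nonneg (Real.rpow_nonneg hs.1.le _) hc1.le)
      rw [hδdef]
      linarith
    obtain ⟨γ, hγdef⟩ : ∃ γ : ℝ, γ = δ / Real.exp 1 := ⟨_, rfl⟩
    have hγ0 : 0 < γ := by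
      rw [hγdef]; exact div_pos hδ0 (Real.exp_pos 1)
    have hφ'lb : ∀ s ∈ Ioo (0:ℝ) t₀, γ / s ≤ φ' s := by
      intro s hs
      have hsε : s ∈ Ioc (0:ℝ) ε := ⟨hs.1, hs.2.le.trans (ht₀.2.trans hτε.le)⟩
      have hμs := hμle s hsε
      have hμp := hμpos s hsε
      have h1 : δ ≤ μ s * φ' s := by
        have h2 := hgs s ⟨hs.1, hs.2.le⟩
        rwa [hgdef s] at h2
      have hφ'pos : 0 < φ' s := by nlinarith
      have hγe : γ * Real.exp 1 = δ := by
        rw [hγdef]; field_simp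
      rw [div_le_iff₀ hs.1]
      nlinarith [Real.exp_pos 1, mul_le_mul_of_nonneg_right hμs hφ'pos.le]
    obtain ⟨F, hFdef⟩ : ∃ F : ℝ → ℝ, F = fun u => φ u - γ * Real.log u := ⟨_, rfl⟩
    have hFd : ∀ x ∈ Ioo (0:ℝ) t₀, HasDerivAt F (φ' x - γ * x⁻¹) x := by
      intro x hx
      have hxT : x ∈ Ioo (0:ℝ) T := ⟨hx.1, hx.2.trans (lt_of_le_of_lt ht₀.2 hτT)⟩
      rw [hFdef]
      exact (hφdiff x hxT).sub ((Real.hasDerivAt_log (ne_of_gt hx.1)).const_mul γ)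
    have hFmono : MonotoneOn F (Ioc 0 t₀) := by
      apply monotoneOn_of_deriv_nonneg (convex_Ioc 0 t₀)
      · rw [hFdef]
        apply ContinuousOn.sub
        · exact hφcont.mono fun x hx =>
            ⟨hx.1.le, hx.2.trans (ht₀.2.trans hτT.le)⟩
        · exact continuousOn_const.mul (Real.continuousOn_log.mono fun x hx => by
            simpa using hx.1.ne')
      · rw [interior_Ioc]
        intro x hx
        exact (hFd x hx).differentiableAt.differentiableWithinAt
      · rw [interior_Ioc]
        intro x hx
        rw [(hFd x hx).deriv]
        have h1 := hφ'lb x hx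
        rw [div_eq_mul_inv] at h1
        linarith
    obtain ⟨s₁, hs₁def⟩ : ∃ s₁ : ℝ, s₁ = t₀ * Real.exp (-(φ t₀)/γ - 1) := ⟨_, rfl⟩
    have hφt₀pos : 0 < φ t₀ := hφpos t₀ ⟨ht₀.1, lt_of_le_of_lt ht₀.2 hτT⟩
    have hs₁pos : 0 < s₁ := by
      rw [hs₁def]; exact mul_pos ht₀.1 (Real.exp_pos _)
    have hs₁lt : s₁ < t₀ := by
      have h1 : -(φ t₀)/γ - 1 < 0 := by
        have h2 : 0 < φ t₀ / γ := div_pos hφt₀pos hγ0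
        rw [neg_div]; linarith
      have h2 : Real.exp (-(φ t₀)/γ - 1) < 1 := Real.exp_lt_one_iff.mpr h1
      rw [hs₁def]
      nlinarith [ht₀.1]
    have hF := hFmono ⟨hs₁pos, hs₁lt.le⟩ ⟨ht₀.1, le_refl _⟩ hs₁lt.le
    simp only [hFdef] at hF
    have hlog : Real.log s₁ = Real.log t₀ + (-(φ t₀)/γ - 1) := by
      rw [hs₁def, Real.log_mul (ne_of_gt ht₀.1) (Real.exp_ne_zero _), Real.log_exp]
    rw [hlog] at hF
    have hexpand : γ * (Real.log t₀ + (-(φ t₀)/γ - 1))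
        = γ * Real.log t₀ + (-(φ t₀) - γ) := by
      field_simp
    rw [hexpand] at hF
    have hφs₁pos : 0 < φ s₁ := hφpos s₁ ⟨hs₁pos,
      hs₁lt.trans (lt_of_le_of_lt ht₀.2 hτT)⟩
    linarith
  intro t ht
  have hφ'ub : ∀ x ∈ Ioo (0:ℝ) τ, φ' x ≤ Real.exp 1 * D * x := by
    intro x hx
    have hxε : x ∈ Ioc (0:ℝ) ε := ⟨hx.1, (hx.2.trans hτε).le⟩
    have hμp := hμpos x hxε
    have hg1 : μ x * φ' x ≤ D * (x ^ (c+1) / (c+1)) := by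
      have h1 := hgB x ⟨hx.1, hx.2.le⟩
      rwa [hgdef x] at h1
    have hW1 : x ^ c * Real.exp (-1) ≤ μ x := hμge x hxε
    have hxc : (0:ℝ) < x ^ c := Real.rpow_pos_of_pos hx.1 c
    have hsplit : x ^ (c+1) = x ^ c * x := by
      rw [Real.rpow_add hx.1, Real.rpow_one]
    have hee : Real.exp 1 * Real.exp (-1) = 1 := by
      rw [← Real.exp_add]; norm_num
    have h2 : D * (x ^ (c+1)/(c+1)) ≤ Real.exp 1 * D * x * μ x := by
      rw [hsplit]
      have hA1 : D * (x ^ c * x / (c+1)) ≤ D * (x ^ c * x) := by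
        apply mul_le_mul_of_nonneg_left _ hD0
        apply div_le_self (mul_nonneg hxc.le hx.1.le) (by linarith)
      have t2 : (0:ℝ) ≤ Real.exp 1 * D * x :=
        mul_nonneg (mul_nonneg (Real.exp_pos 1).le hD0) hx.1.le
      have t3 := mul_le_mul_of_nonneg_left hW1 t2
      have t4 : Real.exp 1 * D * x * (x ^ c * Real.exp (-1)) = D * (x ^ c * x) := by
        linear_combination (D * x * x ^ c) * hee
      linarith
    have h3 : μ x * φ' x ≤ Real.exp 1 * D * x * μ x := hg1.trans h2
    have h4 : φ' x * μ x ≤ Real.exp 1 * D * x * μ x := by linarith [h3]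
    exact le_of_mul_le_mul_right h4 hμp
  obtain ⟨D₂, hD₂def⟩ : ∃ D₂ : ℝ, D₂ = Real.exp 1 * D := ⟨_, rfl⟩
  obtain ⟨F₂, hF₂def⟩ : ∃ F₂ : ℝ → ℝ, F₂ = fun u => D₂ * u^2 / 2 - φ u := ⟨_, rfl⟩
  have hF₂d : ∀ x ∈ Ioo (0:ℝ) τ, HasDerivAt F₂ (D₂ * x - φ' x) x := by
    intro x hx
    have hxT : x ∈ Ioo (0:ℝ) T := ⟨hx.1, hx.2.trans hτT⟩
    have h1 : HasDerivAt (fun u : ℝ => D₂ * u^2/2) (D₂ * x) x := by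
      have h2 := ((hasDerivAt_pow 2 x).const_mul D₂).div_const 2
      refine h2.congr_deriv ?_
      push_cast
      ring
    rw [hF₂def]
    exact h1.sub (hφdiff x hxT)
  have hF₂mono : MonotoneOn F₂ (Icc 0 τ) := by
    apply monotoneOn_of_deriv_nonneg (convex_Icc 0 τ)
    · rw [hF₂def]
      apply ContinuousOn.sub
      · exact ((continuous_const.mul (continuous_pow 2)).div_const 2).continuousOn
      · exact hφcont.mono fun x hx => ⟨hx.1, hx.2.trans hτT.le⟩
    · rw [interior_Icc]
      intro x hx
      exact (hF₂d x hx).differentiableAt.differentiableWithinAt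
    · rw [interior_Icc]
      intro x hx
      rw [(hF₂d x hx).deriv]
      have h1 := hφ'ub x hx
      rw [hD₂def]
      linarith
  have hmono := hF₂mono ⟨le_refl (0:ℝ), hτ0.le⟩ ⟨ht.1.le, ht.2⟩ ht.1.le
  simp only [hF₂def] at hmono
  have hfin : D₂ * t^2/2 ≤ Q/2 := by
    have he : Real.exp 1 < 2.7182818286 := Real.exp_one_lt_d9
    have he0 : 0 < Real.exp 1 := Real.exp_pos 1
    have k1 : 3*(β+1)*t ≤ 1 := by
      have h1 : t ≤ 1/(3*(β+1)) := ht.2.trans hτβ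
      rw [le_div_iff₀ (by linarith)] at h1
      linarith
    have k0 : 0 ≤ 3*(β+1)*t := mul_nonneg (by linarith) ht.1.le
    have k2 : 9*((β+1)*t)^2 ≤ 1 := by nlinarith
    have k3 : Real.exp 1 * Real.exp 1 ≤ 9 := by nlinarith
    have k4 : 9*(β*t^2) ≤ 9*((β+1)*t)^2 := by
      nlinarith [mul_nonneg hβ0 (sq_nonneg t), sq_nonneg (β*t), sq_nonneg t]
    have k5 : Real.exp 1 * Real.exp 1 * (β * t^2) ≤ 1 := by
      nlinarith [k2, k3, k4, mul_nonneg hβ0 (sq_nonneg t)]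
    have k6 := mul_le_mul_of_nonneg_left k5 hQ0
    rw [mul_one] at k6
    rw [hD₂def, hDdef]
    linarith [k6]
  linarith

set_option maxHeartbeats 1000000 in
/-- Key step in the proof of Theorem 1.1: a positive solution of the linear ODE
with singular drift `m(t) = -c/t + A(t)` cannot vanish at the focal endpoint. -/
theorem stmt_1 (T c : ℝ) (hT : 0 < T) (hc : 1 ≤ c)
    (m : ℝ → ℝ) (hm : ContinuousOn m (Ioc 0 T))
    (A : ℝ → ℝ)
    (hmA : ∀ t ∈ Ioc 0 T, m t = -c / t + A t)
    (hA : Tendsto A (nhdsWithin 0 (Ioi 0)) (nhds 0))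
    (h : ℝ → ℝ) (hhcont : ContinuousOn h (Ioo 0 T))
    (hhbd : ∃ B : ℝ, ∀ t ∈ Ioo 0 T, B ≤ h t)
    (φ : ℝ → ℝ)
    (hφcont : ContinuousOn φ (Icc 0 T))
    (hφC2 : ContDiffOn ℝ 2 φ (Ioo 0 T))
    (hφpos : ∀ t ∈ Ioo 0 T, 0 < φ t)
    (hODE : ∀ t ∈ Ioo 0 T,
      deriv (deriv φ) t - m t * deriv φ t + h t * φ t = 0) :
    0 < φ 0 := by
  by_contra hcon
  push_neg at hcon
  obtain ⟨B, hB⟩ := hhbd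
  obtain ⟨β, hβdef⟩ : ∃ β : ℝ, β = max (-B) 0 := ⟨_, rfl⟩
  have hβ0 : (0:ℝ) ≤ β := hβdef ▸ le_max_right _ _
  have hβ : ∀ t ∈ Ioo (0:ℝ) T, -h t ≤ β := fun t ht =>
    le_trans (neg_le_neg (hB t ht)) (hβdef ▸ le_max_left _ _)
  obtain ⟨C, hC⟩ := isCompact_Icc.exists_bound_of_continuousOn hφcont
  obtain ⟨P, hPdef⟩ : ∃ P : ℝ, P = max C 0 := ⟨_, rfl⟩
  have hP0 : (0:ℝ) ≤ P := hPdef ▸ le_max_right _ _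
  have hP : ∀ t ∈ Icc (0:ℝ) T, φ t ≤ P := fun t ht =>
    ((le_abs_self _).trans (hC t ht)).trans (hPdef ▸ le_max_left _ _)
  -- A is small near 0
  obtain ⟨ε₀, hε₀pos, hε₀⟩ : ∃ ε₀ > 0, ∀ t ∈ Ioc (0:ℝ) ε₀, |A t| ≤ 1 := by
    rcases Metric.tendsto_nhdsWithin_nhds.mp hA 1 one_pos with ⟨δ, hδ, hδ'⟩
    refine ⟨δ/2, by linarith, fun t ht => ?_⟩
    have h1 : dist t 0 < δ := by
      rw [Real.dist_eq, sub_zero, abs_of_pos ht.1]; linarith [ht.2]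
    have h2 := hδ' ht.1 h1
    rw [Real.dist_eq, sub_zero] at h2
    exact h2.le
  obtain ⟨ε, hεdef⟩ : ∃ ε : ℝ, ε = min (min (T/2) 1) ε₀ := ⟨_, rfl⟩
  have hε0 : 0 < ε := hεdef ▸ lt_min (lt_min (by linarith) one_pos) hε₀pos
  have hεT : ε < T := by
    rw [hεdef]
    exact lt_of_le_of_lt ((min_le_left _ _).trans (min_le_left _ _)) (by linarith)
  have hε1 : ε ≤ 1 := hεdef ▸ (min_le_left _ _).trans (min_le_right _ _)
  have hεA : ∀ t ∈ Ioc (0:ℝ) ε, |A t| ≤ 1 := fun t ht =>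
    hε₀ t ⟨ht.1, ht.2.trans (hεdef ▸ min_le_right _ _)⟩
  -- A continuous on Ioo 0 T
  have hAc : ContinuousOn A (Ioo 0 T) := by
    have h1 : ContinuousOn (fun t => m t + c / t) (Ioo 0 T) :=
      (hm.mono Ioo_subset_Ioc_self).add
        (continuousOn_const.div continuousOn_id fun x hx => ne_of_gt hx.1)
    refine h1.congr fun x hx => ?_
    have h2 := hmA x (Ioo_subset_Ioc_self hx)
    rw [neg_div] at h2
    linarith
  obtain ⟨W, hWdef⟩ : ∃ W : ℝ → ℝ, W = fun u => Real.exp (-(∫ s in ε..u, A s)) :=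
    ⟨_, rfl⟩
  have hWpos : ∀ u, 0 < W u := by
    intro u; simp only [hWdef]; exact Real.exp_pos _
  have hWbd : ∀ t ∈ Ioc (0:ℝ) ε, Real.exp (-1) ≤ W t ∧ W t ≤ Real.exp 1 := by
    intro t ht
    have hsub : Set.uIoc ε t ⊆ Ioc (0:ℝ) ε := by
      intro x hx
      rcases Set.mem_uIoc.mp hx with h1 | h1
      · exact ⟨hε0.trans h1.1, h1.2.trans ht.2⟩
      · exact ⟨ht.1.trans h1.1, h1.2⟩
    have hbd : ‖∫ s in ε..t, A s‖ ≤ 1 * |t - ε| :=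
      intervalIntegral.norm_integral_le_of_norm_le_const fun x hx => by
        simpa [Real.norm_eq_abs] using hεA x (hsub hx)
    rw [Real.norm_eq_abs, one_mul] at hbd
    have h2 : |t - ε| ≤ 1 := by
      rw [abs_of_nonpos (by linarith [ht.2])]; linarith [ht.1]
    have h4 := abs_le.mp (hbd.trans h2)
    simp only [hWdef]
    constructor
    · apply Real.exp_le_exp.mpr; linarith [h4.2]
    · apply Real.exp_le_exp.mpr; linarith [h4.1]
  obtain ⟨μ, hμdef⟩ : ∃ μ : ℝ → ℝ, μ = fun u => u ^ c * W u := ⟨_, rfl⟩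
  have hμpos : ∀ t ∈ Ioc (0:ℝ) ε, 0 < μ t := by
    intro t ht
    simp only [hμdef]
    exact mul_pos (Real.rpow_pos_of_pos ht.1 c) (hWpos t)
  have hμle' : ∀ t ∈ Ioc (0:ℝ) ε, μ t ≤ t ^ c * Real.exp 1 := by
    intro t ht
    have h3 : (0:ℝ) < t ^ c := Real.rpow_pos_of_pos ht.1 c
    simp only [hμdef]
    exact mul_le_mul_of_nonneg_left (hWbd t ht).2 h3.le
  have hμge : ∀ t ∈ Ioc (0:ℝ) ε, t ^ c * Real.exp (-1) ≤ μ t := by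
    intro t ht
    have h3 : (0:ℝ) < t ^ c := Real.rpow_pos_of_pos ht.1 c
    simp only [hμdef]
    exact mul_le_mul_of_nonneg_left (hWbd t ht).1 h3.le
  have hμle : ∀ t ∈ Ioc (0:ℝ) ε, μ t ≤ Real.exp 1 * t := by
    intro t ht
    have h1 : t ^ c ≤ t := by
      have h2 := Real.rpow_le_rpow_of_exponent_ge ht.1 (ht.2.trans hε1) hc
      simpa [Real.rpow_one] using h2
    have h5 : t ^ c * Real.exp 1 ≤ t * Real.exp 1 :=
      mul_le_mul_of_nonneg_right h1 (Real.exp_pos 1).le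
    have h6 := hμle' t ht
    linarith
  set φ' := deriv φ with hφ'def
  have hφdiff : ∀ t ∈ Ioo (0:ℝ) T, HasDerivAt φ (φ' t) t := by
    intro t ht
    exact ((hφC2.differentiableOn (by norm_num)).differentiableAt
      (isOpen_Ioo.mem_nhds ht)).hasDerivAt
  have hφ'diff : ∀ t ∈ Ioo (0:ℝ) T, HasDerivAt φ' (deriv φ' t) t := by
    intro t ht
    have h1 : ContDiffOn ℝ 1 φ' (Ioo 0 T) := hφC2.deriv_of_isOpen isOpen_Ioo (by norm_num)
    exact ((h1.differentiableOn (by norm_num)).differentiableAt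
      (isOpen_Ioo.mem_nhds ht)).hasDerivAt
  obtain ⟨g, hgdef⟩ : ∃ g : ℝ → ℝ, g = fun u => μ u * φ' u := ⟨_, rfl⟩
  have hgdef' : ∀ u, g u = μ u * φ' u := fun u => by rw [hgdef]
  have hgderiv : ∀ t ∈ Ioo (0:ℝ) ε, HasDerivAt g (-(μ t * (h t * φ t))) t := by
    intro t ht
    have htT : t ∈ Ioo (0:ℝ) T := ⟨ht.1, ht.2.trans hεT⟩
    have ht0 : t ≠ 0 := ne_of_gt ht.1
    have hInt : HasDerivAt (fun u => ∫ s in ε..u, A s) (A t) t := by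
      apply intervalIntegral.integral_hasDerivAt_right
      · apply ContinuousOn.intervalIntegrable
        apply hAc.mono
        intro x hx
        rcases Set.mem_uIcc.mp hx with h1 | h1
        · exact ⟨hε0.trans_le h1.1, lt_of_le_of_lt h1.2 htT.2⟩
        · exact ⟨ht.1.trans_le h1.1, lt_of_le_of_lt h1.2 hεT⟩
      · exact (hAc.stronglyMeasurableAtFilter isOpen_Ioo) t htT
      · exact hAc.continuousAt (isOpen_Ioo.mem_nhds htT)
    have hW' : HasDerivAt W (-(A t) * W t) t := by
      have h1 := (hInt.neg).exp
      simp only [hWdef]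
      simpa [mul_comm] using h1
    have hrp : HasDerivAt (fun u : ℝ => u ^ c) (c * t ^ (c - 1)) t :=
      Real.hasDerivAt_rpow_const (Or.inl ht0)
    have hμ' : HasDerivAt μ ((c * t ^ (c-1)) * W t + t ^ c * (-(A t) * W t)) t := by
      rw [hμdef]; exact hrp.mul hW'
    have hg' : HasDerivAt g ((c * t ^ (c-1) * W t + t ^ c * (-(A t) * W t)) * φ' t
        + μ t * deriv φ' t) t := by
      rw [hgdef]; exact hμ'.mul (hφ'diff t htT)
    convert hg' using 1
    have hODEt := hODE t htT
    have hmt := hmA t ⟨htT.1, htT.2.le⟩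
    have hts : t ^ (c - 1) = t ^ c / t := by
      rw [Real.rpow_sub ht.1, Real.rpow_one]
    have hd2 : deriv φ' t = m t * φ' t - h t * φ t := by linarith
    rw [hd2, hmt, hts]
    simp only [hμdef]
    field_simp
    ring
  obtain ⟨τ, hτdef⟩ : ∃ τ : ℝ, τ = min (ε/2) (1/(3*(β+1))) := ⟨_, rfl⟩
  have hτ0 : 0 < τ := by
    rw [hτdef]
    exact lt_min (by linarith) (div_pos one_pos (by linarith))
  have hτε : τ < ε := by
    rw [hτdef]
    exact lt_of_le_of_lt (min_le_left _ _) (by linarith)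
  have hτβ : τ ≤ 1/(3*(β+1)) := hτdef ▸ min_le_right _ _
  have hτT : τ < T := hτε.trans hεT
  have key : ∀ Q : ℝ, 0 ≤ Q → (∀ t ∈ Ioc (0:ℝ) τ, φ t ≤ Q) →
      ∀ t ∈ Ioc (0:ℝ) τ, φ t ≤ Q / 2 := fun Q =>
    stmt_1_key T c ε τ β Q φ φ' μ g h hc hβ0 hτ0 hτε hτT hτβ hβ
      hφpos hφcont hcon hφdiff hgderiv hgdef' hμpos hμle hμle' hμge
  have hind : ∀ n : ℕ, ∀ t ∈ Ioc (0:ℝ) τ, φ t ≤ P / 2 ^ n := by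
    intro n
    induction n with
    | zero =>
      intro t ht
      simpa using hP t ⟨ht.1.le, ht.2.trans hτT.le⟩
    | succ k ih =>
      intro t ht
      have h1 := key (P / 2 ^ k) (div_nonneg hP0 (by positivity)) ih t ht
      calc φ t ≤ P / 2 ^ k / 2 := h1
        _ = P / 2 ^ (k+1) := by rw [pow_succ]; ring
  have hφτ : 0 < φ τ := hφpos τ ⟨hτ0, hτT⟩
  have hlim : Tendsto (fun n : ℕ => P / 2 ^ n) atTop (nhds 0) := by
    have h2 : Tendsto (fun n : ℕ => ((1:ℝ)/2) ^ n) atTop (nhds 0) :=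
      tendsto_pow_atTop_nhds_zero_of_lt_one (by norm_num) (by norm_num)
    have h3 := h2.const_mul P
    rw [mul_zero] at h3
    have h4 : (fun n : ℕ => P / 2 ^ n) = fun n : ℕ => P * ((1:ℝ)/2) ^ n := by
      funext n
      rw [div_pow]
      ring
    rw [h4]
    exact h3
  have hfinal : φ τ ≤ 0 := ge_of_tendsto' hlim fun n => hind n τ ⟨hτ0, le_refl τ⟩
  linarith
end

section
/- Let T > 0, s ∈ (0,2), q > 2, and c ≥ 1. Let m : (0,T) → ℝ be continuous with m(t) = -c/t + A(t) where A(t) → 0 as t → 0⁺, and let k : [0,T] → ℝ be continuous. Suppose φ : [0,T] → ℝ satisfies: φ(t) > 0 for all t ∈ [0,T]; φ is α-Hölder continuous on [0,T] for some α ∈ (0,1) (i.e., there exists R > 0 with |φ(x) - φ(y)| ≤ R·|x-y|^α for all x, y ∈ [0,T]); φ is twice continuously differentiable on (0,T); and φ''(t) - m(t)·φ'(t) - k(t)·φ(t) + φ(t)^{q-1}/t^s = 0 for all t ∈ (0,T). Then φ has a local maximum at 0: there exists t₀ ∈ (0,T) such that φ(t) ≤ φ(0) for all t ∈ [0,t₀].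 -/
open Set Filter

/-- ODE form of Lemma 2.1: a positive Hölder-continuous solution of the
Hardy–Sobolev ODE has a local maximum at the focal endpoint `0`. -/
theorem stmt_2 (T s q c : ℝ) (hT : 0 < T) (hs0 : 0 < s) (hs2 : s < 2)
    (hq : 2 < q) (hc : 1 ≤ c)
    (m : ℝ → ℝ) (hm : ContinuousOn m (Ioo 0 T))
    (A : ℝ → ℝ)
    (hmA : ∀ t ∈ Ioo 0 T, m t = -c / t + A t)
    (hA : Tendsto A (nhdsWithin 0 (Ioi 0)) (nhds 0))
    (k : ℝ → ℝ) (hk : ContinuousOn k (Icc 0 T))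
    (φ : ℝ → ℝ)
    (hφpos : ∀ t ∈ Icc 0 T, 0 < φ t)
    (hφHolder : ∃ α ∈ Ioo (0:ℝ) 1, ∃ R > (0:ℝ),
      ∀ x ∈ Icc 0 T, ∀ y ∈ Icc 0 T, |φ x - φ y| ≤ R * |x - y| ^ α)
    (hφC2 : ContDiffOn ℝ 2 φ (Ioo 0 T))
    (hODE : ∀ t ∈ Ioo 0 T,
      deriv (deriv φ) t - m t * deriv φ t - k t * φ t + φ t ^ (q - 1) / t ^ s = 0) :
    ∃ t₀ ∈ Ioo 0 T, ∀ t ∈ Icc 0 t₀, φ t ≤ φ 0 := by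
  obtain ⟨α, ⟨hα0, hα1⟩, R, hR, hHold⟩ := hφHolder
  have hφ0 : 0 < φ 0 := hφpos 0 ⟨le_rfl, hT.le⟩
  -- differentiability facts
  have hφdiff : DifferentiableOn ℝ φ (Ioo 0 T) := hφC2.differentiableOn (by norm_num)
  have hφ'cont : ContinuousOn (deriv φ) (Ioo 0 T) :=
    hφC2.continuousOn_deriv_of_isOpen isOpen_Ioo (by norm_num)
  have hφ'C1 : ContDiffOn ℝ 1 (deriv φ) (Ioo 0 T) :=
    hφC2.deriv_of_isOpen isOpen_Ioo (by norm_num)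
  have hφ'diff : DifferentiableOn ℝ (deriv φ) (Ioo 0 T) := hφ'C1.differentiableOn (by norm_num)
  have hφ'at : ∀ x ∈ Ioo (0:ℝ) T, HasDerivAt φ (deriv φ x) x := fun x hx =>
    (hφdiff.differentiableAt (isOpen_Ioo.mem_nhds hx)).hasDerivAt
  have hφ''at : ∀ x ∈ Ioo (0:ℝ) T, HasDerivAt (deriv φ) (deriv (deriv φ) x) x := fun x hx =>
    (hφ'diff.differentiableAt (isOpen_Ioo.mem_nhds hx)).hasDerivAt
  -- bound on k
  obtain ⟨K, hK⟩ : ∃ K, ∀ x ∈ Icc (0:ℝ) T, ‖k x‖ ≤ K :=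
    isCompact_Icc.exists_bound_of_continuousOn hk
  have hK0 : 0 ≤ K := le_trans (norm_nonneg _) (hK 0 ⟨le_rfl, hT.le⟩)
  -- upper bound on φ
  obtain ⟨Mφ, hMφ⟩ : ∃ M : ℝ, ∀ t ∈ Icc (0:ℝ) T, φ t ≤ M := by
    refine ⟨φ 0 + R * T ^ α, ?_⟩
    intro t ht
    have h1 := hHold t ht 0 ⟨le_rfl, hT.le⟩
    have h2 : |t - 0| ^ α ≤ T ^ α := by
      apply Real.rpow_le_rpow (abs_nonneg _) _ hα0.le
      rw [sub_zero, abs_of_nonneg ht.1]; exact ht.2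
    have h3 := (abs_le.mp h1).2
    nlinarith
  -- rpow tends to 0
  have hrpow : ∀ p : ℝ, 0 < p → Tendsto (fun t : ℝ => t ^ p) (nhdsWithin 0 (Ioi 0)) (nhds 0) := by
    intro p hp
    have h : ContinuousAt (fun t : ℝ => t ^ p) 0 :=
      Real.continuousAt_rpow_const 0 p (Or.inr hp.le)
    have h2 : Tendsto (fun t : ℝ => t ^ p) (nhds 0) (nhds ((0:ℝ) ^ p)) := h
    rw [Real.zero_rpow hp.ne'] at h2
    exact h2.mono_left nhdsWithin_le_nhds
  -- eventual smallness facts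
  have h1 : ∀ᶠ t in nhdsWithin 0 (Ioi 0), t ∈ Ioo (0:ℝ) T :=
    eventually_of_mem (Ioo_mem_nhdsGT_of_mem ⟨le_rfl, hT⟩) (fun _ hx => hx)
  have h2 : ∀ᶠ t in nhdsWithin 0 (Ioi 0), t < (1:ℝ) :=
    eventually_of_mem (Ioo_mem_nhdsGT_of_mem ⟨le_rfl, one_pos⟩) (fun _ hx => hx.2)
  have h3 : ∀ᶠ t in nhdsWithin 0 (Ioi 0), |A t| < α / 2 := by
    have h := hA.eventually (eventually_abs_sub_lt 0 (by positivity : (0:ℝ) < α / 2))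
    simpa using h
  have h4 : ∀ᶠ t in nhdsWithin 0 (Ioi 0), R * t ^ α < φ 0 / 2 := by
    have h := (hrpow α hα0).const_mul R
    rw [mul_zero] at h
    exact h.eventually_lt_const (by positivity)
  have h5 : ∀ᶠ t in nhdsWithin 0 (Ioi 0), (K * Mφ + 1) * t ^ s < (φ 0 / 2) ^ (q - 1) := by
    have h := (hrpow s hs0).const_mul (K * Mφ + 1)
    rw [mul_zero] at h
    have hpos : (0:ℝ) < (φ 0 / 2) ^ (q - 1) := Real.rpow_pos_of_pos (by positivity) _
    exact h.eventually_lt_const hpos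
  obtain ⟨δ, hδpos', hδsub⟩ :=
    mem_nhdsGT_iff_exists_Ioc_subset.mp (h1.and (h2.and (h3.and (h4.and h5))))
  have hδpos : (0:ℝ) < δ := hδpos'
  have hδ : ∀ t ∈ Ioc (0:ℝ) δ, t ∈ Ioo (0:ℝ) T ∧ t < 1 ∧ |A t| < α / 2 ∧
      R * t ^ α < φ 0 / 2 ∧ (K * Mφ + 1) * t ^ s < (φ 0 / 2) ^ (q - 1) :=
    fun t ht => hδsub ht
  have hsub : Ioc (0:ℝ) δ ⊆ Ioo 0 T := fun t ht => (hδ t ht).1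
  have hδT : δ < T := (hδ δ ⟨hδpos, le_rfl⟩).1.2
  -- lower bound on φ near 0
  have hφlow : ∀ t ∈ Ioc (0:ℝ) δ, φ 0 / 2 ≤ φ t := by
    intro t ht
    have hmem : t ∈ Icc (0:ℝ) T := ⟨ht.1.le, (hsub ht).2.le⟩
    have hH := hHold t hmem 0 ⟨le_rfl, hT.le⟩
    rw [sub_zero, abs_of_pos ht.1] at hH
    have := (abs_le.mp hH).1
    have := (hδ t ht).2.2.2.1
    linarith
  -- the nonlinear term dominates
  have hbad : ∀ t ∈ Ioc (0:ℝ) δ, k t * φ t - φ t ^ (q - 1) / t ^ s < 0 := by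
    intro t ht
    have htT := hsub ht
    have hmem : t ∈ Icc (0:ℝ) T := ⟨ht.1.le, htT.2.le⟩
    have hts : (0:ℝ) < t ^ s := Real.rpow_pos_of_pos ht.1 s
    have hφt : 0 < φ t := hφpos t hmem
    have hk1 : k t ≤ K := le_trans (le_abs_self _) (by simpa [Real.norm_eq_abs] using hK t hmem)
    have hup : k t * φ t ≤ K * Mφ :=
      le_trans (mul_le_mul_of_nonneg_right hk1 hφt.le)
        (mul_le_mul_of_nonneg_left (hMφ t hmem) hK0)
    have hlo : (K * Mφ + 1) ≤ φ t ^ (q - 1) / t ^ s := by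
      rw [le_div_iff₀ hts]
      have h1 : (K * Mφ + 1) * t ^ s < (φ 0 / 2) ^ (q - 1) := (hδ t ht).2.2.2.2
      have h2 : (φ 0 / 2) ^ (q - 1) ≤ φ t ^ (q - 1) :=
        Real.rpow_le_rpow (by positivity) (hφlow t ht) (by linarith)
      linarith
    linarith
  -- rearranged ODE
  have hφ'' : ∀ t ∈ Ioc (0:ℝ) δ,
      deriv (deriv φ) t = m t * deriv φ t + (k t * φ t - φ t ^ (q - 1) / t ^ s) := by
    intro t ht; have := hODE t (hsub ht); linarith
  -- m is negative near 0
  have hmlt : ∀ t ∈ Ioc (0:ℝ) δ, m t < 0 := by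
    intro t ht
    rw [hmA t (hsub ht)]
    have ht1 : t < 1 := (hδ t ht).2.1
    have hAt : A t < 1 / 2 := by
      have := (le_abs_self (A t)).trans (hδ t ht).2.2.1.le
      linarith
    have hct : 1 / t ≤ c / t := (div_le_div_iff_of_pos_right ht.1).mpr hc
    have h1t : 1 ≤ 1 / t := one_le_one_div ht.1 ht1.le
    rw [neg_div]
    linarith
  -- the exponent γ
  set γ : ℝ := 1 - α / 2 with hγdef
  have hγ0 : 0 < γ := by rw [hγdef]; linarith
  have hγ1 : γ < 1 := by rw [hγdef]; linarith
  -- derivative of the auxiliary function g t = t^γ * φ'(t)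
  have hgderiv : ∀ x ∈ Ioc (0:ℝ) δ, 0 < deriv φ x →
      HasDerivAt (fun t : ℝ => t ^ γ * deriv φ t)
        (γ * x ^ (γ - 1) * deriv φ x + x ^ γ * deriv (deriv φ) x) x ∧
      γ * x ^ (γ - 1) * deriv φ x + x ^ γ * deriv (deriv φ) x < 0 := by
    intro x hx hx'
    have hxT := hsub hx
    have hx0 : 0 < x := hx.1
    constructor
    · exact (Real.hasDerivAt_rpow_const (Or.inl hx0.ne')).mul (hφ''at x hxT)
    · have hx1 : x < 1 := (hδ x hx).2.1
      have hAx : |A x| < α / 2 := (hδ x hx).2.2.1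
      have hb := hbad x hx
      have hxγ : (0:ℝ) < x ^ γ := Real.rpow_pos_of_pos hx0 γ
      have hpow : x ^ (γ - 1) = x ^ γ / x := by
        rw [Real.rpow_sub hx0, Real.rpow_one]
      have hcoef : γ / x + m x ≤ 0 := by
        rw [hmA x hxT]
        have hA1 : A x ≤ α / 2 := (le_abs_self _).trans hAx.le
        have hA2 : α / 2 ≤ (α / 2) / x := by
          rw [le_div_iff₀ hx0]; nlinarith
        have heq : (γ - c + α / 2) / x = γ / x + (-c / x + (α / 2) / x) := by ring
        have hnum : γ - c + α / 2 ≤ 0 := by rw [hγdef]; linarith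
        have hle : (γ - c + α / 2) / x ≤ 0 := div_nonpos_of_nonpos_of_nonneg hnum hx0.le
        linarith [heq ▸ hle]
      rw [hφ'' x hx]
      have key : γ * x ^ (γ - 1) * deriv φ x
            + x ^ γ * (m x * deriv φ x + (k x * φ x - φ x ^ (q - 1) / x ^ s))
          = x ^ γ * ((γ / x + m x) * deriv φ x + (k x * φ x - φ x ^ (q - 1) / x ^ s)) := by
        rw [hpow]; ring
      rw [key]
      apply mul_neg_of_pos_of_neg hxγ
      nlinarith [mul_nonneg (neg_nonneg.mpr hcoef) hx'.le]
  -- if φ' is positive somewhere near 0, it is positive all the way down to 0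
  have hL1 : ∀ t₂ ∈ Ioc (0:ℝ) δ, 0 < deriv φ t₂ → ∀ r ∈ Ioc (0:ℝ) t₂, 0 < deriv φ r := by
    intro t₂ ht₂ ht₂'
    by_contra hcon
    push_neg at hcon
    obtain ⟨t₁, ht₁, ht₁'⟩ := hcon
    have hIccsub : Icc t₁ t₂ ⊆ Ioo 0 T := fun r hr =>
      hsub ⟨lt_of_lt_of_le ht₁.1 hr.1, le_trans hr.2 ht₂.2⟩
    set F : Set ℝ := Icc t₁ t₂ ∩ (deriv φ) ⁻¹' (Iic 0) with hF
    have hFclosed : IsClosed F :=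
      (hφ'cont.mono hIccsub).preimage_isClosed_of_isClosed isClosed_Icc isClosed_Iic
    have hFcpt : IsCompact F := isCompact_Icc.of_isClosed_subset hFclosed inter_subset_left
    have hFne : F.Nonempty := ⟨t₁, ⟨⟨le_rfl, ht₁.2⟩, ht₁'⟩⟩
    have ht₃F : sSup F ∈ F := hFcpt.sSup_mem hFne
    set t₃ : ℝ := sSup F with ht₃def
    have ht₃Icc : t₃ ∈ Icc t₁ t₂ := ht₃F.1
    have ht₃' : deriv φ t₃ ≤ 0 := ht₃F.2
    have ht₃lt : t₃ < t₂ :=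
      lt_of_le_of_ne ht₃Icc.2 (fun h => by rw [h] at ht₃'; linarith)
    have hpos : ∀ r ∈ Ioc t₃ t₂, 0 < deriv φ r := by
      intro r hr
      by_contra hr'
      push_neg at hr'
      have hrF : r ∈ F := ⟨⟨le_trans ht₃Icc.1 hr.1.le, hr.2⟩, hr'⟩
      have := le_csSup hFcpt.bddAbove hrF
      linarith [hr.1]
    have hanti : StrictAntiOn (deriv φ) (Icc t₃ t₂) := by
      apply strictAntiOn_of_deriv_neg (convex_Icc _ _)
      · exact hφ'cont.mono fun r hr => hIccsub ⟨le_trans ht₃Icc.1 hr.1, hr.2⟩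
      · intro x hx
        rw [interior_Icc] at hx
        have hxmem : x ∈ Ioc (0:ℝ) δ :=
          ⟨lt_trans (lt_of_lt_of_le ht₁.1 ht₃Icc.1) hx.1, le_trans hx.2.le ht₂.2⟩
        rw [hφ'' x hxmem]
        have hbx := hbad x hxmem
        have hmx := hmlt x hxmem
        have hpx := hpos x ⟨hx.1, hx.2.le⟩
        nlinarith
    have := hanti ⟨le_rfl, ht₃lt.le⟩ ⟨ht₃Icc.2, le_rfl⟩ ht₃lt
    linarith
  -- φ' is nonpositive on (0, δ)
  have hφ'le : ∀ t ∈ Ioo (0:ℝ) δ, deriv φ t ≤ 0 := by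
    by_contra hcon
    push_neg at hcon
    obtain ⟨t₂, ht₂mem, ht₂pos⟩ := hcon
    have ht₂ : t₂ ∈ Ioc (0:ℝ) δ := ⟨ht₂mem.1, ht₂mem.2.le⟩
    have hpos := hL1 t₂ ht₂ ht₂pos
    set g : ℝ → ℝ := fun t => t ^ γ * deriv φ t with hg
    have hglb : ∀ t ∈ Ioo (0:ℝ) t₂, g t₂ ≤ g t := by
      intro t ht
      have hanti : AntitoneOn g (Icc t t₂) := by
        apply antitoneOn_of_deriv_nonpos (convex_Icc _ _)
        · apply ContinuousOn.mul
          · exact continuousOn_id.rpow_const fun x _ => Or.inr hγ0.le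
          · exact hφ'cont.mono fun r hr =>
              hsub ⟨lt_of_lt_of_le ht.1 hr.1, le_trans hr.2 ht₂.2⟩
        · intro x hx
          rw [interior_Icc] at hx
          have hxm : x ∈ Ioc (0:ℝ) δ := ⟨lt_trans ht.1 hx.1, le_trans hx.2.le ht₂.2⟩
          have hx' : 0 < deriv φ x := hpos x ⟨hxm.1, hx.2.le⟩
          exact ((hgderiv x hxm hx').1).differentiableAt.differentiableWithinAt
        · intro x hx
          rw [interior_Icc] at hx
          have hxm : x ∈ Ioc (0:ℝ) δ := ⟨lt_trans ht.1 hx.1, le_trans hx.2.le ht₂.2⟩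
          have hx' : 0 < deriv φ x := hpos x ⟨hxm.1, hx.2.le⟩
          obtain ⟨hd, hneg⟩ := hgderiv x hxm hx'
          rw [hd.deriv]
          exact hneg.le
      exact hanti ⟨le_rfl, ht.2.le⟩ ⟨ht.2.le, le_rfl⟩ ht.2.le
    have hκpos : 0 < g t₂ := mul_pos (Real.rpow_pos_of_pos ht₂.1 γ) ht₂pos
    set κ : ℝ := g t₂ with hκdef
    have hφ'lb : ∀ t ∈ Ioo (0:ℝ) t₂, κ / t ^ γ ≤ deriv φ t := by
      intro t ht
      have h1 := hglb t ht
      have h2 : (0:ℝ) < t ^ γ := Real.rpow_pos_of_pos ht.1 γ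
      rw [div_le_iff₀ h2]
      have : g t = t ^ γ * deriv φ t := rfl
      linarith [this ▸ h1]
    have h2γpos : (0:ℝ) < 2 ^ γ := Real.rpow_pos_of_pos (by norm_num) γ
    -- choose a small ε
    have hev1 : ∀ᶠ ε in nhdsWithin 0 (Ioi 0), R * ε ^ (α / 2) < κ / 2 ^ γ := by
      have h := (hrpow (α / 2) (by positivity)).const_mul R
      rw [mul_zero] at h
      exact h.eventually_lt_const (by positivity)
    have hev2 : ∀ᶠ ε in nhdsWithin 0 (Ioi 0), ε < t₂ / 2 :=
      eventually_of_mem (Ioo_mem_nhdsGT_of_mem ⟨le_rfl, half_pos ht₂.1⟩) fun _ hx => hx.2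
    obtain ⟨ε, ⟨hε1, hε2⟩, hε0'⟩ := ((hev1.and hev2).and eventually_mem_nhdsWithin).exists
    have hεpos : (0:ℝ) < ε := hε0'
    have h2ε : 2 * ε < t₂ := by linarith
    have hIccsub2 : Icc ε (2 * ε) ⊆ Ioo 0 T := fun r hr =>
      ⟨lt_of_lt_of_le hεpos hr.1,
        lt_of_le_of_lt hr.2 (lt_trans h2ε (lt_of_le_of_lt ht₂.2 hδT))⟩
    obtain ⟨ξ, hξ, hξeq⟩ := exists_hasDerivAt_eq_slope φ (deriv φ)
      (by linarith : ε < 2 * ε)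
      (hφdiff.continuousOn.mono hIccsub2)
      (fun x hx => hφ'at x (hIccsub2 ⟨hx.1.le, hx.2.le⟩))
    have hξmem : ξ ∈ Ioo (0:ℝ) t₂ := ⟨lt_trans hεpos hξ.1, lt_trans hξ.2 h2ε⟩
    have hlb := hφ'lb ξ hξmem
    have hlb2 : κ / (2 * ε) ^ γ ≤ deriv φ ξ := by
      refine le_trans (div_le_div_of_nonneg_left hκpos.le
        (Real.rpow_pos_of_pos hξmem.1 γ)
        (Real.rpow_le_rpow hξmem.1.le hξ.2.le hγ0.le)) hlb
    have hH := hHold (2 * ε) ⟨by linarith, by linarith [hδT, ht₂.2]⟩ ε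
      ⟨hεpos.le, by linarith [hδT, ht₂.2]⟩
    rw [show 2 * ε - ε = ε by ring, abs_of_pos hεpos] at hH
    have hslope : φ (2 * ε) - φ ε = deriv φ ξ * ε := by
      rw [hξeq, show 2 * ε - ε = ε by ring]
      field_simp
    have hmain : κ / (2 * ε) ^ γ * ε ≤ R * ε ^ α := by
      calc κ / (2 * ε) ^ γ * ε ≤ deriv φ ξ * ε := mul_le_mul_of_nonneg_right hlb2 hεpos.le
        _ = φ (2 * ε) - φ ε := hslope.symm
        _ ≤ R * ε ^ α := le_trans (le_abs_self _) hH
    have e1 : (2 * ε) ^ γ = 2 ^ γ * ε ^ γ := Real.mul_rpow (by norm_num) hεpos.le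
    rw [e1, div_mul_eq_mul_div, div_le_iff₀ (by positivity)] at hmain
    have e4 : ε ^ α * ε ^ γ = ε ^ (α / 2) * ε := by
      rw [← Real.rpow_add hεpos]
      have h : α + γ = α / 2 + 1 := by rw [hγdef]; ring
      rw [h, Real.rpow_add hεpos, Real.rpow_one]
    have heq2 : R * ε ^ α * (2 ^ γ * ε ^ γ) = R * ε ^ (α / 2) * 2 ^ γ * ε := by
      rw [show R * ε ^ α * (2 ^ γ * ε ^ γ) = R * 2 ^ γ * (ε ^ α * ε ^ γ) from by ring, e4]
      ring
    rw [heq2] at hmain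
    have hfinal : κ ≤ R * ε ^ (α / 2) * 2 ^ γ := le_of_mul_le_mul_right hmain hεpos
    have := (lt_div_iff₀ h2γpos).mp hε1
    linarith
  -- conclusion
  refine ⟨δ, ⟨hδpos, hδT⟩, ?_⟩
  intro t ht
  rcases eq_or_lt_of_le ht.1 with h0 | h0
  · rw [← h0]
  · have hkey : ∀ ε ∈ Ioo (0:ℝ) t, φ t ≤ φ 0 + R * ε ^ α := by
      intro ε hε
      have hanti : AntitoneOn φ (Icc ε t) := by
        apply antitoneOn_of_deriv_nonpos (convex_Icc _ _)
        · exact hφdiff.continuousOn.mono fun r hr =>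
            ⟨lt_of_lt_of_le hε.1 hr.1, lt_of_le_of_lt (le_trans hr.2 ht.2) hδT⟩
        · rw [interior_Icc]
          exact hφdiff.mono fun r hr =>
            ⟨lt_trans hε.1 hr.1, lt_trans (lt_of_lt_of_le hr.2 ht.2) hδT⟩
        · intro x hx
          rw [interior_Icc] at hx
          exact hφ'le x ⟨lt_trans hε.1 hx.1, lt_of_lt_of_le hx.2 ht.2⟩
      have hφtε : φ t ≤ φ ε := hanti ⟨le_rfl, hε.2.le⟩ ⟨hε.2.le, le_rfl⟩ hε.2.le
      have h2 := hHold ε ⟨hε.1.le, le_trans (le_trans hε.2.le ht.2) hδT.le⟩ 0 ⟨le_rfl, hT.le⟩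
      rw [sub_zero, abs_of_pos hε.1] at h2
      have := (abs_le.mp h2).2
      linarith
    by_contra hgt
    push_neg at hgt
    have hη : 0 < φ t - φ 0 := by linarith
    have hev : ∀ᶠ ε in nhdsWithin 0 (Ioi 0), R * ε ^ α < φ t - φ 0 := by
      have h := (hrpow α hα0).const_mul R
      rw [mul_zero] at h
      exact h.eventually_lt_const hη
    have hev2 : ∀ᶠ ε in nhdsWithin 0 (Ioi 0), ε < t :=
      eventually_of_mem (Ioo_mem_nhdsGT_of_mem ⟨le_rfl, h0⟩) fun _ hx => hx.2
    obtain ⟨ε, ⟨hε1, hε2⟩, hε0'⟩ := ((hev.and hev2).and eventually_mem_nhdsWithin).exists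
    have := hkey ε ⟨hε0', hε2⟩
    linarith
end

section
/- Let b > 0 and β ≥ 1. Suppose v : (0,b) → ℝ is twice differentiable and satisfies v''(t) + (β/t)·v'(t) < 0 for all t ∈ (0,b), and suppose there exists t₀ ∈ (0,b) with v'(t₀) ≥ 0. Then v(t) → -∞ as t → 0⁺. -/
open Set Filter

/-- Auxiliary calculus lemma: if `v'' + (β/t)v' < 0` on `(0,b)` with `β ≥ 1`
and `v' (t₀) ≥ 0` at some `t₀ ∈ (0,b)`, then `v(t) → -∞` as `t → 0⁺`. -/
theorem stmt_4 (b β : ℝ) (hb : 0 < b) (hβ : 1 ≤ β)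
    (v : ℝ → ℝ)
    (hv : ∀ t ∈ Ioo 0 b, DifferentiableAt ℝ v t)
    (hv' : ∀ t ∈ Ioo 0 b, DifferentiableAt ℝ (deriv v) t)
    (hineq : ∀ t ∈ Ioo 0 b, deriv (deriv v) t + (β / t) * deriv v t < 0)
    (t₀ : ℝ) (ht₀ : t₀ ∈ Ioo 0 b) (hv't₀ : 0 ≤ deriv v t₀) :
    Tendsto v (nhdsWithin 0 (Ioi 0)) atBot := by
  set w : ℝ → ℝ := fun t => t ^ β * deriv v t with hw
  -- derivative of w
  have hwderiv : ∀ t ∈ Ioo 0 b, HasDerivAt w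
      (t ^ β * (deriv (deriv v) t + (β / t) * deriv v t)) t := by
    intro t ht
    have ht0 : (0 : ℝ) < t := ht.1
    have h1 : HasDerivAt (fun s : ℝ => s ^ β) (β * t ^ (β - 1)) t :=
      Real.hasDerivAt_rpow_const (Or.inl (ne_of_gt ht0))
    have h2 : HasDerivAt (deriv v) (deriv (deriv v) t) t := (hv' t ht).hasDerivAt
    have := h1.mul h2
    refine this.congr_deriv ?_
    have hpow : t ^ (β - 1) = t ^ β / t := by
      rw [Real.rpow_sub ht0, Real.rpow_one]
    rw [hpow]
    field_simp
    ring
  have hwdiff : ∀ t ∈ Ioo 0 b, DifferentiableAt ℝ w t := fun t ht =>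
    (hwderiv t ht).differentiableAt
  -- w strictly anti on Ioo 0 b
  have hanti : StrictAntiOn w (Ioo 0 b) := by
    apply StrictAntiOn.mono (s := Ioo 0 b) ?_ (subset_refl _)
    apply strictAntiOn_of_deriv_neg (convex_Ioo 0 b)
    · exact fun t ht => (hwdiff t ht).continuousAt.continuousWithinAt
    · intro t ht
      rw [interior_Ioo] at ht
      rw [(hwderiv t ht).deriv]
      exact mul_neg_of_pos_of_neg (Real.rpow_pos_of_pos ht.1 β) (hineq t ht)
  set t₁ : ℝ := t₀ / 2 with ht₁def
  have ht₁pos : 0 < t₁ := half_pos ht₀.1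
  have ht₁lt : t₁ < t₀ := by simp [ht₁def]; linarith [ht₀.1]
  have ht₁mem : t₁ ∈ Ioo 0 b := ⟨ht₁pos, lt_trans ht₁lt ht₀.2⟩
  set C : ℝ := w t₁ with hCdef
  have hC : 0 < C := by
    have := hanti ht₁mem ht₀ ht₁lt
    have hwt₀ : 0 ≤ w t₀ :=
      mul_nonneg (le_of_lt (Real.rpow_pos_of_pos ht₀.1 β)) hv't₀
    linarith
  set t₂ : ℝ := min t₁ 1 with ht₂def
  have ht₂pos : 0 < t₂ := lt_min ht₁pos one_pos
  have ht₂le : t₂ ≤ t₁ := min_le_left _ _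
  have ht₂mem : t₂ ∈ Ioo 0 b := ⟨ht₂pos, lt_of_le_of_lt ht₂le ht₁mem.2⟩
  set g : ℝ → ℝ := fun t => v t - C * Real.log t with hgdef
  have hgderiv : ∀ t ∈ Ioo 0 b, HasDerivAt g (deriv v t - C * (1 / t)) t := by
    intro t ht
    exact (hv t ht).hasDerivAt.sub
      (((Real.hasDerivAt_log (ne_of_gt ht.1)).const_mul C).congr_deriv (by ring))
  -- g is monotone on Ioc 0 t₂
  have hmono : StrictMonoOn g (Ioc 0 t₂) := by
    apply strictMonoOn_of_deriv_pos (convex_Ioc 0 t₂)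
    · intro t ht
      have htm : t ∈ Ioo 0 b := ⟨ht.1, lt_of_le_of_lt ht.2 ht₂mem.2⟩
      exact (hgderiv t htm).differentiableAt.continuousAt.continuousWithinAt
    · intro t ht
      rw [interior_Ioc] at ht
      have htm : t ∈ Ioo 0 b := ⟨ht.1, lt_trans ht.2 ht₂mem.2⟩
      rw [(hgderiv t htm).deriv]
      have hwt : C < w t := hanti htm ht₁mem (lt_of_lt_of_le ht.2 ht₂le)
      have htpow : (0 : ℝ) < t ^ β := Real.rpow_pos_of_pos ht.1 β
      have hv'lb : C / t ^ β < deriv v t := by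
        rw [div_lt_iff₀ htpow]
        calc C < w t := hwt
        _ = deriv v t * t ^ β := by rw [hw]; ring
      have hle1 : t ≤ 1 := le_of_lt (lt_of_lt_of_le ht.2 (min_le_right _ _))
      have hpowle : t ^ β ≤ t := by
        calc t ^ β ≤ t ^ (1:ℝ) := Real.rpow_le_rpow_of_exponent_ge ht.1 hle1 hβ
        _ = t := Real.rpow_one t
      have : C / t ≤ C / t ^ β := div_le_div_of_nonneg_left (le_of_lt hC) htpow hpowle
      have : C / t < deriv v t := lt_of_le_of_lt this hv'lb
      have hdiv : C * (1 / t) = C / t := by ring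
      linarith [this]
  -- conclude: v t ≤ g t₂ + C * log t on Ioo 0 t₂
  have hbound : ∀ t ∈ Ioo 0 t₂, v t ≤ g t₂ + C * Real.log t := by
    intro t ht
    have := le_of_lt (hmono ⟨ht.1, le_of_lt ht.2⟩ ⟨ht₂pos, le_refl _⟩ ht.2)
    simp only [hgdef] at this ⊢
    linarith
  have hlog : Tendsto (fun t => g t₂ + C * Real.log t) (nhdsWithin 0 (Ioi 0)) atBot := by
    apply tendsto_atBot_add_const_left
    exact Real.tendsto_log_nhdsGT_zero.const_mul_atBot hC
  apply tendsto_atBot_mono' _ _ hlog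
  filter_upwards [Ioo_mem_nhdsGT_of_mem (Set.mem_Ico.mpr ⟨le_refl 0, ht₂pos⟩)] with t ht
  exact hbound t ht
end
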